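/- arXiv:1209.6205 — 7 statements merged into one kernel-verified Lean document; each statement's English description precedes it below -/
import Mathlib

section
/- Let Λ be a finite nonnegative measure on (0,∞) with total mass b > 0, let θ > 0, and let Λ_θ be b times the law of min(X, Y), where X has law Λ/b and Y is an independent exponential random variable with rate θ; explicitly, Λ_θ(A) = ∫_{(0,∞)} ∫_0^∞ 1_{min(x,y) ∈ A} θ e^{−θ y} dy Λ(dx) for Borel sets A. Define ψ(λ) = λ − ∫_{(0,∞)}(1 − e^{−λu})Λ(du) and ψ_θ(λ) = λ − ∫_{(0,∞)}(1 − e^{−λu})Λ_θ(du). Then for every λ > 0, ψ_θ(λ) = λ ψ(λ + θ)/(λ + θ). In particular, if r > θ and ψ(r) = 0, then ψ_θ(r − θ) = 0. -/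
open MeasureTheory Set Real
open scoped ENNReal

lemma aux_cont (c : ℝ) : Continuous (fun y : ℝ => c * Real.exp (-(c * y))) := by
  continuity

lemma aux_int1 (c x : ℝ) : ∫ y in (0:ℝ)..x, c * Real.exp (-(c * y)) = 1 - Real.exp (-(c * x)) := by
  have h : ∀ t ∈ uIcc (0:ℝ) x, HasDerivAt (fun a => -Real.exp (-(c * a))) (c * Real.exp (-(c * t))) t :=
    fun t _ => ProbabilityTheory.hasDerivAt_neg_exp_mul_exp
  rw [intervalIntegral.integral_eq_sub_of_hasDerivAt h ((aux_cont c).intervalIntegrable 0 x)]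
  simp [Real.exp_zero]
  ring

lemma aux_intOn (c a : ℝ) (hc : 0 < c) :
    IntegrableOn (fun y : ℝ => c * Real.exp (-(c * y))) (Ioi a) :=
  by unfold IntegrableOn; simpa [neg_mul] using (exp_neg_integrableOn_Ioi a hc).const_mul c

lemma aux_int2 (c a : ℝ) (hc : 0 < c) :
    ∫ y in Ioi a, c * Real.exp (-(c * y)) = Real.exp (-(c * a)) := by
  have h := integral_comp_mul_left_Ioi (fun u : ℝ => Real.exp (-u)) a hc
  simp only [smul_eq_mul] at h
  rw [MeasureTheory.integral_const_mul, h]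
  rw [integral_exp_neg_Ioi]
  field_simp

lemma aux_fcont (l θ x : ℝ) :
    Continuous (fun y : ℝ => (1 - Real.exp (-(l * min x y))) * (θ * Real.exp (-(θ * y)))) := by
  have h1 : Continuous (fun y : ℝ => min x y) := continuous_const.min continuous_id
  continuity

lemma aux_fint (l θ x : ℝ) (hθ : 0 < θ) (hl : 0 < l) (hx : 0 < x) :
    IntegrableOn (fun y : ℝ => (1 - Real.exp (-(l * min x y))) * (θ * Real.exp (-(θ * y))))
      (Ioi (0:ℝ)) := by
  apply Integrable.mono' (aux_intOn θ 0 hθ) (aux_fcont l θ x).aestronglyMeasurable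
  rw [ae_restrict_iff' measurableSet_Ioi]
  refine ae_of_all _ fun y hy => ?_
  have hmin : 0 < min x y := lt_min hx hy
  have h1 : Real.exp (-(l * min x y)) ≤ 1 := by
    rw [Real.exp_le_one_iff]; nlinarith
  have h2 : (0:ℝ) < Real.exp (-(l * min x y)) := Real.exp_pos _
  have h3 : (0:ℝ) < θ * Real.exp (-(θ * y)) := by positivity
  rw [Real.norm_eq_abs, abs_mul, abs_of_nonneg (by linarith), abs_of_nonneg h3.le]
  nlinarith

lemma aux_inner (θ l x : ℝ) (hθ : 0 < θ) (hl : 0 < l) (hx : 0 < x) :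
    ∫ y in Ioi (0:ℝ), (1 - Real.exp (-(l * min x y))) * (θ * Real.exp (-(θ * y)))
      = l / (l + θ) * (1 - Real.exp (-((l + θ) * x))) := by
  have hlθ : 0 < l + θ := by linarith
  have hint := aux_fint l θ x hθ hl hx
  have hsplit : Ioi (0:ℝ) = Ioc 0 x ∪ Ioi x := (Ioc_union_Ioi_eq_Ioi hx.le).symm
  rw [hsplit] at hint ⊢
  rw [setIntegral_union (Ioc_disjoint_Ioi le_rfl) measurableSet_Ioi
    (hint.mono_set subset_union_left) (hint.mono_set subset_union_right)]
  have hpiece1 : ∫ y in Ioc (0:ℝ) x, (1 - Real.exp (-(l * min x y))) * (θ * Real.exp (-(θ * y)))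
      = (1 - Real.exp (-(θ * x))) - θ / (l + θ) * (1 - Real.exp (-((l + θ) * x))) := by
    rw [setIntegral_congr_fun measurableSet_Ioc
      (fun y hy => by simp only [min_eq_right hy.2] :
        EqOn (fun y : ℝ => (1 - Real.exp (-(l * min x y))) * (θ * Real.exp (-(θ * y))))
          (fun y : ℝ => (1 - Real.exp (-(l * y))) * (θ * Real.exp (-(θ * y)))) (Ioc 0 x))]
    rw [← intervalIntegral.integral_of_le hx.le]
    have hcongr : ∀ y : ℝ, (1 - Real.exp (-(l * y))) * (θ * Real.exp (-(θ * y)))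
        = θ * Real.exp (-(θ * y)) - θ / (l + θ) * ((l + θ) * Real.exp (-((l + θ) * y))) := by
      intro y
      have he : Real.exp (-((l + θ) * y)) = Real.exp (-(l * y)) * Real.exp (-(θ * y)) := by
        rw [← Real.exp_add]; ring_nf
      rw [he]; field_simp
    rw [intervalIntegral.integral_congr (fun y _ => hcongr y)]
    rw [intervalIntegral.integral_sub ((aux_cont θ).intervalIntegrable 0 x)
      (((aux_cont (l + θ)).intervalIntegrable 0 x).const_mul _)]
    rw [aux_int1 θ x, intervalIntegral.integral_const_mul, aux_int1 (l + θ) x]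
  have hpiece2 : ∫ y in Ioi x, (1 - Real.exp (-(l * min x y))) * (θ * Real.exp (-(θ * y)))
      = (1 - Real.exp (-(l * x))) * Real.exp (-(θ * x)) := by
    rw [setIntegral_congr_fun measurableSet_Ioi
      (fun y hy => by simp only [min_eq_left (le_of_lt (mem_Ioi.1 hy))] :
        EqOn (fun y : ℝ => (1 - Real.exp (-(l * min x y))) * (θ * Real.exp (-(θ * y))))
          (fun y : ℝ => (1 - Real.exp (-(l * x))) * (θ * Real.exp (-(θ * y)))) (Ioi x))]
    rw [MeasureTheory.integral_const_mul, aux_int2 θ x hθ]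
  rw [hpiece1, hpiece2]
  have he : Real.exp (-((l + θ) * x)) = Real.exp (-(l * x)) * Real.exp (-(θ * x)) := by
    rw [← Real.exp_add]; ring_nf
  rw [he]; field_simp; ring

theorem clonal_psi_model_II
    (b θ : ℝ) (hb : 0 < b) (hθ : 0 < θ)
    (Λ Λθ : Measure ℝ) [IsFiniteMeasure Λ]
    (hΛsupp : Λ (Ioi 0)ᶜ = 0) (hΛmass : Λ univ = ENNReal.ofReal b)
    (hΛθ : ∀ A : Set ℝ, MeasurableSet A →
      Λθ A = ∫⁻ x, (∫⁻ y in Ioi (0:ℝ),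
        A.indicator (fun _ => ENNReal.ofReal (θ * Real.exp (-(θ * y)))) (min x y)) ∂Λ)
    (ψ ψθ : ℝ → ℝ)
    (hψ : ∀ l : ℝ, ψ l = l - ∫ u, (1 - Real.exp (-(l * u))) ∂Λ)
    (hψθ : ∀ l : ℝ, ψθ l = l - ∫ u, (1 - Real.exp (-(l * u))) ∂Λθ) :
    (∀ l : ℝ, 0 < l → ψθ l = l * ψ (l + θ) / (l + θ)) ∧
    (∀ r : ℝ, θ < r → ψ r = 0 → ψθ (r - θ) = 0) := by
  -- a.e. positivity w.r.t. Λ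
  have hΛae : ∀ᵐ x ∂Λ, 0 < x := by
    rw [ae_iff]
    convert hΛsupp using 2
    ext; simp
  -- density and the auxiliary measure ν
  set d : ℝ → ℝ≥0∞ := fun y => ENNReal.ofReal (θ * Real.exp (-(θ * y))) with hd
  have hdmeas : Measurable d := by
    apply Measurable.ennreal_ofReal
    exact (aux_cont θ).measurable
  set ν : Measure ℝ := (volume.restrict (Ioi 0)).withDensity d with hν
  haveI hνfin : IsFiniteMeasure ν := by
    constructor
    have h1 : ν univ = ∫⁻ y in Ioi (0:ℝ), d y ∂volume := by
      rw [hν, withDensity_apply d MeasurableSet.univ, Measure.restrict_univ]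
    rw [h1, ← ofReal_integral_eq_lintegral_ofReal (aux_intOn θ 0 hθ)
      (ae_of_all _ fun y => by positivity), aux_int2 θ 0 hθ]
    simp
  set m : ℝ × ℝ → ℝ := fun p => min p.1 p.2 with hmdef
  have hm : Measurable m := measurable_fst.min measurable_snd
  -- Λθ as a pushforward
  have hmap : Λθ = Measure.map m (Λ.prod ν) := by
    ext A hA
    rw [hΛθ A hA, Measure.map_apply hm hA, Measure.prod_apply (hm hA)]
    refine lintegral_congr fun x => ?_
    have hS : MeasurableSet {y : ℝ | min x y ∈ A} :=
      (measurable_const.min measurable_id) hA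
    have hpre : Prod.mk x ⁻¹' (m ⁻¹' A) = {y : ℝ | min x y ∈ A} := rfl
    rw [hpre, hν, withDensity_apply d hS, ← lintegral_indicator hS d]
    refine lintegral_congr fun y => ?_
    by_cases hmem : min x y ∈ A
    · rw [Set.indicator_of_mem hmem, Set.indicator_of_mem (by exact hmem)]
    · rw [Set.indicator_of_notMem hmem, Set.indicator_of_notMem (by exact hmem)]
  -- support of Λθ
  have hΛθsupp : Λθ (Ioi (0:ℝ))ᶜ = 0 := by
    rw [hΛθ _ measurableSet_Ioi.compl]
    have hz : ∀ x : ℝ, 0 < x → (∫⁻ y in Ioi (0:ℝ),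
        (Ioi (0:ℝ))ᶜ.indicator (fun _ => ENNReal.ofReal (θ * Real.exp (-(θ * y)))) (min x y)) = 0 := by
      intro x hx
      have hz0 : ∀ y ∈ Ioi (0:ℝ), (Ioi (0:ℝ))ᶜ.indicator
          (fun _ => ENNReal.ofReal (θ * Real.exp (-(θ * y)))) (min x y) = (0:ℝ≥0∞) :=
        fun y hy => Set.indicator_of_notMem (by simp only [Set.mem_compl_iff, Set.mem_Ioi, not_not]; exact lt_min hx hy) _
      rw [setLIntegral_congr_fun measurableSet_Ioi hz0]
      simp
    calc ∫⁻ x, (∫⁻ y in Ioi (0:ℝ),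
          (Ioi (0:ℝ))ᶜ.indicator (fun _ => ENNReal.ofReal (θ * Real.exp (-(θ * y)))) (min x y)) ∂Λ
        = ∫⁻ _, 0 ∂Λ := lintegral_congr_ae (hΛae.mono fun x hx => hz x hx)
      _ = 0 := lintegral_zero
  have hΛθae : ∀ᵐ u ∂Λθ, 0 < u := by
    rw [ae_iff]
    convert hΛθsupp using 2
    ext; simp
  -- main computation for each l > 0
  have key : ∀ l : ℝ, 0 < l →
      ∫ u, (1 - Real.exp (-(l * u))) ∂Λθ
        = l / (l + θ) * ∫ u, (1 - Real.exp (-((l + θ) * u))) ∂Λ := by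
    intro l hl
    have hlθ : 0 < l + θ := by linarith
    set g : ℝ → ℝ≥0∞ := fun u => ENNReal.ofReal (1 - Real.exp (-(l * u))) with hgdef
    have hg : Measurable g := by
      apply Measurable.ennreal_ofReal
      exact (continuous_const.sub ((continuous_const.mul continuous_id).neg.rexp)).measurable
    set g2 : ℝ → ℝ≥0∞ := fun u => ENNReal.ofReal (1 - Real.exp (-((l + θ) * u))) with hg2def
    have hg2 : Measurable g2 := by
      apply Measurable.ennreal_ofReal
      exact (continuous_const.sub ((continuous_const.mul continuous_id).neg.rexp)).measurable
    set K : ℝ≥0∞ := ∫⁻ x, g2 x ∂Λ with hK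
    have hKfin : K ≠ ⊤ := by
      have hle : K ≤ Λ univ := by
        rw [hK]
        calc ∫⁻ x, g2 x ∂Λ ≤ ∫⁻ _, 1 ∂Λ := by
              refine lintegral_mono fun x => ?_
              rw [hg2def]
              exact ENNReal.ofReal_le_one.2 (by nlinarith [Real.exp_pos (-((l + θ) * x))])
          _ = Λ univ := by simp
      exact (lt_of_le_of_lt hle (measure_lt_top Λ univ)).ne
    -- lintegral over Λθ
    have hinner : ∀ x : ℝ, 0 < x → (∫⁻ y in Ioi (0:ℝ), d y * g (min x y) ∂volume)
        = ENNReal.ofReal (l / (l + θ) * (1 - Real.exp (-((l + θ) * x)))) := by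
      intro x hx
      rw [← aux_inner θ l x hθ hl hx,
        ofReal_integral_eq_lintegral_ofReal (aux_fint l θ x hθ hl hx) ?_]
      · refine lintegral_congr fun y => ?_
        simp only [hd, hgdef]
        rw [← ENNReal.ofReal_mul (by positivity)]
        congr 1
        ring
      · filter_upwards [ae_restrict_mem measurableSet_Ioi] with y hy
        simp only [Pi.zero_apply]
        have hmin : 0 < min x y := lt_min hx hy
        have h1 : Real.exp (-(l * min x y)) ≤ 1 := by
          rw [Real.exp_le_one_iff]; nlinarith
        have h3 : (0:ℝ) < θ * Real.exp (-(θ * y)) := by positivity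
        nlinarith
    have hL : ∫⁻ u, g u ∂Λθ = ENNReal.ofReal (l / (l + θ)) * K := by
      rw [hmap, lintegral_map hg hm, lintegral_prod (fun z => g (m z)) ((hg.comp hm).aemeasurable)]
      have hstep : ∀ x : ℝ, (∫⁻ y, g (m (x, y)) ∂ν) = ∫⁻ y in Ioi (0:ℝ), d y * g (min x y) ∂volume := by
        intro x
        rw [hν, lintegral_withDensity_eq_lintegral_mul _ hdmeas
          (by exact hg.comp (measurable_const.min measurable_id))]
        rfl
      calc ∫⁻ x, (∫⁻ y, g (m (x, y)) ∂ν) ∂Λ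
          = ∫⁻ x, ENNReal.ofReal (l / (l + θ)) * g2 x ∂Λ := by
            refine lintegral_congr_ae (hΛae.mono fun x hx => ?_)
            show (∫⁻ y, g (m (x, y)) ∂ν) = ENNReal.ofReal (l / (l + θ)) * g2 x
            rw [hstep x, hinner x hx, hg2def,
              ENNReal.ofReal_mul (by positivity)]
        _ = ENNReal.ofReal (l / (l + θ)) * K := lintegral_const_mul _ hg2
    -- convert Bochner integrals
    have hBΛ : ∫ u, (1 - Real.exp (-((l + θ) * u))) ∂Λ = K.toReal := by
      have hnn : 0 ≤ᵐ[Λ] fun u : ℝ => 1 - Real.exp (-((l + θ) * u)) :=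
        hΛae.mono fun x hx => by
          have : Real.exp (-((l + θ) * x)) ≤ 1 := by rw [Real.exp_le_one_iff]; nlinarith
          simp only [Pi.zero_apply]; linarith
      have hsm : AEStronglyMeasurable (fun u : ℝ => 1 - Real.exp (-((l + θ) * u))) Λ :=
        (Continuous.aestronglyMeasurable (by fun_prop))
      rw [integral_eq_lintegral_of_nonneg_ae hnn hsm]
    have hBΛθ : ∫ u, (1 - Real.exp (-(l * u))) ∂Λθ = (ENNReal.ofReal (l / (l + θ)) * K).toReal := by
      have hnn : 0 ≤ᵐ[Λθ] fun u : ℝ => 1 - Real.exp (-(l * u)) :=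
        hΛθae.mono fun x hx => by
          have : Real.exp (-(l * x)) ≤ 1 := by rw [Real.exp_le_one_iff]; nlinarith
          simp only [Pi.zero_apply]; linarith
      have hsm : AEStronglyMeasurable (fun u : ℝ => 1 - Real.exp (-(l * u))) Λθ :=
        (Continuous.aestronglyMeasurable (by fun_prop))
      rw [integral_eq_lintegral_of_nonneg_ae hnn hsm]
      rw [← hL]
    rw [hBΛ, hBΛθ, ENNReal.toReal_mul, ENNReal.toReal_ofReal (by positivity)]
  -- conclude
  have part1 : ∀ l : ℝ, 0 < l → ψθ l = l * ψ (l + θ) / (l + θ) := by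
    intro l hl
    have hlθ : 0 < l + θ := by linarith
    rw [hψθ l, hψ (l + θ), key l hl]
    field_simp
  refine ⟨part1, fun r hr h0 => ?_⟩
  have h := part1 (r - θ) (by linarith)
  rw [h, show r - θ + θ = r from by ring, h0, mul_zero, zero_div]
end

section
/- Let r ≥ 0, let ψ : (r, ∞) → (0, ∞) be a function, and let W : [0,∞) → [1,∞) be nondecreasing and continuously differentiable with W(0) = 1 and ∫_0^∞ W(x) e^{−λ x} dx = 1/ψ(λ) for every λ > r. Let θ > 0 and define W_θ(x) = 1 + ∫_0^x e^{−θ u} W'(u) du and ψ_θ(λ) = λ ψ(λ + θ)/(λ + θ). Then for every λ > max(r − θ, 0), ∫_0^∞ W_θ(x) e^{−λ x} dx = 1/ψ_θ(λ). -/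
open MeasureTheory Set Filter Topology

theorem laplace_transform_of_clonal_scale_function_model_II
    (r : ℝ) (hr : 0 ≤ r) (ψ : ℝ → ℝ) (hψpos : ∀ l : ℝ, r < l → 0 < ψ l)
    (W W' : ℝ → ℝ)
    (hW1 : ∀ x ∈ Ici (0:ℝ), 1 ≤ W x)
    (hWmono : MonotoneOn W (Ici 0))
    (hWderiv : ∀ x ∈ Ici (0:ℝ), HasDerivWithinAt W (W' x) (Ici 0) x)
    (hW'cont : ContinuousOn W' (Ici 0))
    (hW0 : W 0 = 1)
    (hLaplace : ∀ l : ℝ, r < l →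
      (∫ x in Ioi (0:ℝ), W x * Real.exp (-(l * x))) = 1 / ψ l)
    (θ : ℝ) (hθ : 0 < θ)
    (Wθ : ℝ → ℝ)
    (hWθ : ∀ x : ℝ, Wθ x = 1 + ∫ u in (0:ℝ)..x, Real.exp (-(θ * u)) * W' u)
    (ψθ : ℝ → ℝ)
    (hψθ : ∀ l : ℝ, ψθ l = l * ψ (l + θ) / (l + θ)) :
    ∀ l : ℝ, max (r - θ) 0 < l →
      (∫ x in Ioi (0:ℝ), Wθ x * Real.exp (-(l * x))) = 1 / ψθ l := by
  -- continuity of W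
  have hWcont : ContinuousOn W (Ici 0) := fun x hx => (hWderiv x hx).continuousWithinAt
  -- exp factors are continuous
  have hexpc : ∀ c : ℝ, Continuous (fun u : ℝ => Real.exp (-(c * u))) := fun c =>
    Real.continuous_exp.comp ((continuous_const.mul continuous_id).neg)
  have hcontmul : ∀ μ : ℝ, ContinuousOn (fun u => Real.exp (-(μ * u)) * W' u) (Ici 0) :=
    fun μ => (hexpc μ).continuousOn.mul hW'cont
  have hgcont : ∀ μ : ℝ, ContinuousOn (fun u => W u * Real.exp (-(μ * u))) (Ici 0) :=
    fun μ => hWcont.mul (hexpc μ).continuousOn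
  -- W' is nonnegative on [0,∞)
  have hW'nonneg : ∀ x ∈ Ici (0:ℝ), 0 ≤ W' x := by
    intro x hx
    have h1 : Tendsto (slope W x) (𝓝[Ici 0 \ {x}] x) (𝓝 (W' x)) :=
      hasDerivWithinAt_iff_tendsto_slope.1 (hWderiv x hx)
    have hsub : Ioi x ⊆ Ici 0 \ {x} := fun y hy => ⟨mem_Ici.2 (le_trans (mem_Ici.1 hx) (le_of_lt (mem_Ioi.1 hy))), ne_of_gt (mem_Ioi.1 hy)⟩
    have h2 : Tendsto (slope W x) (𝓝[>] x) (𝓝 (W' x)) :=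
      h1.mono_left (nhdsWithin_mono _ hsub)
    refine ge_of_tendsto h2 ?_
    filter_upwards [self_mem_nhdsWithin] with y hy
    rw [slope_def_field]
    apply div_nonneg
    · exact sub_nonneg.2 (hWmono hx (mem_Ici.2 (le_trans (mem_Ici.1 hx) (le_of_lt (mem_Ioi.1 hy)))) (le_of_lt (mem_Ioi.1 hy)))
    · exact sub_nonneg.2 (le_of_lt (mem_Ioi.1 hy))
  -- integration by parts on [0,T]
  have hparts : ∀ μ T : ℝ, 0 ≤ T →
      (∫ u in (0:ℝ)..T, (Real.exp (-(μ * u)) * W' u - μ * (W u * Real.exp (-(μ * u)))))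
        = Real.exp (-(μ * T)) * W T - 1 := by
    intro μ T hT
    have h := intervalIntegral.integral_eq_sub_of_hasDeriv_right_of_le hT
      (f := fun x => Real.exp (-(μ * x)) * W x)
      (f' := fun x => Real.exp (-(μ * x)) * W' x - μ * (W x * Real.exp (-(μ * x))))
      ((hexpc μ).continuousOn.mul (hWcont.mono Icc_subset_Ici_self))
      (by
        intro x hx
        have hx0 : (0:ℝ) ≤ x := le_of_lt hx.1
        have hWd : HasDerivWithinAt W (W' x) (Ioi x) x :=
          (hWderiv x hx0).mono (fun y hy => le_trans hx0 (le_of_lt hy))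
        have hed : HasDerivAt (fun y : ℝ => Real.exp (-(μ * y))) (Real.exp (-(μ * x)) * -(μ * 1)) x :=
          (((hasDerivAt_id x).const_mul μ).neg).exp
        have hmul := (hed.hasDerivWithinAt (s := Ioi x)).mul hWd
        convert hmul using 1
        · rfl
        · rfl
        ring)
      (by
        apply ContinuousOn.intervalIntegrable
        rw [uIcc_of_le hT]
        exact ((hcontmul μ).mono Icc_subset_Ici_self).sub
          (continuous_const.continuousOn.mul ((hgcont μ).mono Icc_subset_Ici_self)))
    rw [h]
    simp [hW0]
  have hpartsA : ∀ μ T : ℝ, 0 ≤ T →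
      (∫ u in (0:ℝ)..T, Real.exp (-(μ * u)) * W' u)
        = Real.exp (-(μ * T)) * W T - 1 + μ * ∫ u in (0:ℝ)..T, W u * Real.exp (-(μ * u)) := by
    intro μ T hT
    have h1 : IntervalIntegrable (fun u => Real.exp (-(μ * u)) * W' u) volume 0 T := by
      apply ContinuousOn.intervalIntegrable
      rw [uIcc_of_le hT]
      exact (hcontmul μ).mono Icc_subset_Ici_self
    have h2 : IntervalIntegrable (fun u => μ * (W u * Real.exp (-(μ * u)))) volume 0 T := by
      apply ContinuousOn.intervalIntegrable
      rw [uIcc_of_le hT]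
      exact continuous_const.continuousOn.mul ((hgcont μ).mono Icc_subset_Ici_self)
    have h := hparts μ T hT
    rw [intervalIntegral.integral_sub h1 h2, intervalIntegral.integral_const_mul] at h
    linarith
  -- integrability of W e^{-μ·}
  have hWint : ∀ μ : ℝ, r < μ → IntegrableOn (fun x => W x * Real.exp (-(μ * x))) (Ioi 0) := by
    intro μ hμ
    by_contra hni
    have h0 := hLaplace μ hμ
    rw [integral_undef hni] at h0
    have hpos : (0:ℝ) < 1 / ψ μ := by
      have := hψpos μ hμ; positivity
    exact (ne_of_gt hpos) h0.symm
  have hgtend : ∀ μ : ℝ, r < μ →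
      Tendsto (fun T => ∫ u in (0:ℝ)..T, W u * Real.exp (-(μ * u))) atTop (𝓝 (1 / ψ μ)) := by
    intro μ hμ
    have := intervalIntegral_tendsto_integral_Ioi 0 (hWint μ hμ) tendsto_id
    rwa [hLaplace μ hμ] at this
  -- decay of W e^{-μ·}
  have hdecay : ∀ μ : ℝ, r < μ → Tendsto (fun x => W x * Real.exp (-(μ * x))) atTop (𝓝 0) := by
    intro μ hμ
    set l0 := (r + μ) / 2 with hl0def
    have hrl0 : r < l0 := by rw [hl0def]; linarith
    have hl0μ : l0 < μ := by rw [hl0def]; linarith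
    have hl0pos : 0 < l0 := lt_of_le_of_lt hr hrl0
    have hF := intervalIntegral_tendsto_integral_Ioi 0 (hWint l0 hrl0) tendsto_id
    have hshift : Tendsto (fun x : ℝ => x + 1) atTop atTop :=
      tendsto_atTop_add_const_right _ 1 tendsto_id
    have hF1 := hF.comp hshift
    have hdiff : Tendsto (fun x => (∫ u in (0:ℝ)..(x + 1), W u * Real.exp (-(l0 * u)))
        - ∫ u in (0:ℝ)..x, W u * Real.exp (-(l0 * u))) atTop (𝓝 0) := by
      have := hF1.sub hF
      simpa using this
    refine squeeze_zero' ?_ ?_ (by simpa using hdiff.mul_const (Real.exp l0))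
    · filter_upwards [eventually_ge_atTop (0:ℝ)] with x hx
      exact mul_nonneg (le_trans zero_le_one (hW1 x hx)) (Real.exp_pos _).le
    · filter_upwards [eventually_ge_atTop (0:ℝ)] with x hx
      have hIccsub : Icc x (x + 1) ⊆ Ici 0 := fun y hy => le_trans hx hy.1
      have hgx : IntervalIntegrable (fun u => W u * Real.exp (-(l0 * u))) volume x (x + 1) := by
        apply ContinuousOn.intervalIntegrable
        rw [uIcc_of_le (by linarith)]
        exact (hgcont l0).mono hIccsub
      have h0x : IntervalIntegrable (fun u => W u * Real.exp (-(l0 * u))) volume 0 x := by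
        apply ContinuousOn.intervalIntegrable
        rw [uIcc_of_le hx]
        exact (hgcont l0).mono Icc_subset_Ici_self
      have h0x1 : IntervalIntegrable (fun u => W u * Real.exp (-(l0 * u))) volume 0 (x + 1) := by
        apply ContinuousOn.intervalIntegrable
        rw [uIcc_of_le (by linarith)]
        exact (hgcont l0).mono Icc_subset_Ici_self
      have hsub : (∫ u in (0:ℝ)..(x + 1), W u * Real.exp (-(l0 * u)))
          - (∫ u in (0:ℝ)..x, W u * Real.exp (-(l0 * u)))
          = ∫ u in x..(x + 1), W u * Real.exp (-(l0 * u)) :=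
        intervalIntegral.integral_interval_sub_left h0x1 h0x
      have hlow : W x * Real.exp (-(l0 * (x + 1)))
          ≤ ∫ u in x..(x + 1), W u * Real.exp (-(l0 * u)) := by
        have hconst : (∫ _ in x..(x + 1), W x * Real.exp (-(l0 * (x + 1))))
            = W x * Real.exp (-(l0 * (x + 1))) := by
          simp
        rw [← hconst]
        apply intervalIntegral.integral_mono_on (by linarith) intervalIntegrable_const hgx
        intro u hu
        have h1 : W x ≤ W u := hWmono hx (le_trans hx hu.1) hu.1
        have h2 : Real.exp (-(l0 * (x + 1))) ≤ Real.exp (-(l0 * u)) := by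
          apply Real.exp_le_exp.2
          nlinarith [hu.2]
        exact mul_le_mul h1 h2 (Real.exp_pos _).le
          (le_trans zero_le_one (hW1 u (le_trans hx hu.1)))
      have key : W x * Real.exp (-(μ * x))
          = (W x * Real.exp (-(l0 * (x + 1)))) * Real.exp (l0 * (x + 1) - μ * x) := by
        rw [mul_assoc, ← Real.exp_add]
        congr 2
        ring
      rw [key]
      have h3 : Real.exp (l0 * (x + 1) - μ * x) ≤ Real.exp l0 := by
        apply Real.exp_le_exp.2
        nlinarith
      have hD : W x * Real.exp (-(l0 * (x + 1)))
          ≤ (∫ u in (0:ℝ)..(x + 1), W u * Real.exp (-(l0 * u)))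
            - ∫ u in (0:ℝ)..x, W u * Real.exp (-(l0 * u)) := by
        rw [hsub]; exact hlow
      apply mul_le_mul hD h3 (Real.exp_pos _).le
      exact le_trans (mul_nonneg (le_trans zero_le_one (hW1 x hx)) (Real.exp_pos _).le) hD
  -- the key improper integral for W'
  have hW'key : ∀ μ : ℝ, r < μ →
      IntegrableOn (fun u => Real.exp (-(μ * u)) * W' u) (Ioi 0) ∧
      (∫ u in Ioi (0:ℝ), Real.exp (-(μ * u)) * W' u) = μ * (1 / ψ μ) - 1 := by
    intro μ hμ
    have htend : Tendsto (fun T => ∫ u in (0:ℝ)..T, Real.exp (-(μ * u)) * W' u) atTop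
        (𝓝 (μ * (1 / ψ μ) - 1)) := by
      have hd : Tendsto (fun T => Real.exp (-(μ * T)) * W T) atTop (𝓝 0) := by
        have := hdecay μ hμ
        simpa [mul_comm] using this
      have h1 := (hd.sub (tendsto_const_nhds (x := (1:ℝ)) (f := atTop))).add ((hgtend μ hμ).const_mul μ)
      have h2 : (0:ℝ) - 1 + μ * (1 / ψ μ) = μ * (1 / ψ μ) - 1 := by ring
      rw [h2] at h1
      apply h1.congr'
      filter_upwards [eventually_ge_atTop (0:ℝ)] with T hT
      exact (hpartsA μ T hT).symm
    have hfi : ∀ T : ℝ, IntegrableOn (fun u => Real.exp (-(μ * u)) * W' u) (Ioc 0 T) := by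
      intro T
      rcases le_or_gt T 0 with h | h
      · rw [Ioc_eq_empty (not_lt.2 h)]; exact integrableOn_empty
      · exact (((hcontmul μ).mono Icc_subset_Ici_self).integrableOn_Icc).mono_set
          Ioc_subset_Icc_self
    have hnorm : Tendsto (fun T => ∫ u in (0:ℝ)..T, ‖Real.exp (-(μ * u)) * W' u‖) atTop
        (𝓝 (μ * (1 / ψ μ) - 1)) := by
      apply htend.congr'
      filter_upwards [eventually_ge_atTop (0:ℝ)] with T hT
      apply intervalIntegral.integral_congr
      intro u hu
      rw [uIcc_of_le hT] at hu
      exact (Real.norm_of_nonneg (mul_nonneg (Real.exp_pos _).le (hW'nonneg u hu.1))).symm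
    have hint := integrableOn_Ioi_of_intervalIntegral_norm_tendsto _ 0 hfi tendsto_id hnorm
    exact ⟨hint, tendsto_nhds_unique (intervalIntegral_tendsto_integral_Ioi 0 hint tendsto_id) htend⟩
  -- main part
  intro l hl
  have hl0 : 0 < l := lt_of_le_of_lt (le_max_right _ _) hl
  have hμ : r < l + θ := by
    have := lt_of_le_of_lt (le_max_left _ _) hl; linarith
  have hm0 : (0:ℝ) ≤ max (r - θ) 0 := le_max_right _ _
  set l' := (max (r - θ) 0 + l) / 2 with hl'def
  have hl'lt : l' < l := by rw [hl'def]; linarith [hl]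
  have hl'pos : 0 < l' := by rw [hl'def]; linarith [hl]
  have hl'θ : r < l' + θ := by
    have h1 : r - θ ≤ max (r - θ) 0 := le_max_left _ _
    have h2 : max (r - θ) 0 < l' := by rw [hl'def]; linarith [hl]
    linarith
  -- Wθ basic facts
  have hWθcontIcc : ∀ T : ℝ, 0 ≤ T → ContinuousOn Wθ (Icc 0 T) := by
    intro T hT
    have hint : IntegrableOn (fun u => Real.exp (-(θ * u)) * W' u) (uIcc 0 T) := by
      rw [uIcc_of_le hT]
      exact ((hcontmul θ).mono Icc_subset_Ici_self).integrableOn_Icc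
    have hc := intervalIntegral.continuousOn_primitive_interval hint
    have := (continuousOn_const (c := (1:ℝ))).add hc
    rw [uIcc_of_le hT] at this
    exact this.congr (fun x _ => hWθ x)
  have hWθderiv : ∀ x : ℝ, 0 < x → HasDerivAt Wθ (Real.exp (-(θ * x)) * W' x) x := by
    intro x hx
    have hii : IntervalIntegrable (fun u => Real.exp (-(θ * u)) * W' u) volume 0 x := by
      apply ContinuousOn.intervalIntegrable
      rw [uIcc_of_le hx.le]
      exact (hcontmul θ).mono Icc_subset_Ici_self
    have hmeas : StronglyMeasurableAtFilter (fun u => Real.exp (-(θ * u)) * W' u) (𝓝 x) volume :=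
      ContinuousOn.stronglyMeasurableAtFilter isOpen_Ioi ((hcontmul θ).mono Ioi_subset_Ici_self) x hx
    have hca : ContinuousAt (fun u => Real.exp (-(θ * u)) * W' u) x :=
      (hcontmul θ).continuousAt (Ici_mem_nhds hx)
    have h := intervalIntegral.integral_hasDerivAt_right hii hmeas hca
    have heq : Wθ = fun y => 1 + ∫ u in (0:ℝ)..y, Real.exp (-(θ * u)) * W' u := funext hWθ
    rw [heq]
    simpa using h.const_add 1
  have hWθ1 : ∀ x : ℝ, 0 ≤ x → 1 ≤ Wθ x := by
    intro x hx
    rw [hWθ x]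
    have : 0 ≤ ∫ u in (0:ℝ)..x, Real.exp (-(θ * u)) * W' u := by
      apply intervalIntegral.integral_nonneg hx
      intro u hu
      exact mul_nonneg (Real.exp_pos _).le (hW'nonneg u hu.1)
    linarith
  -- bound for Wθ
  have hC := (hW'key (l' + θ) hl'θ).1
  set C0 := ∫ u in Ioi (0:ℝ), Real.exp (-((l' + θ) * u)) * W' u with hC0
  have hWθbound : ∀ T : ℝ, 0 ≤ T → Wθ T ≤ 1 + Real.exp (l' * T) * C0 := by
    intro T hT
    rw [hWθ T]
    have hii1 : IntervalIntegrable (fun u => Real.exp (-(θ * u)) * W' u) volume 0 T := by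
      apply ContinuousOn.intervalIntegrable
      rw [uIcc_of_le hT]
      exact (hcontmul θ).mono Icc_subset_Ici_self
    have hii2 : IntervalIntegrable
        (fun u => Real.exp (l' * T) * (Real.exp (-((l' + θ) * u)) * W' u)) volume 0 T := by
      apply ContinuousOn.intervalIntegrable
      rw [uIcc_of_le hT]
      exact continuous_const.continuousOn.mul ((hcontmul (l' + θ)).mono Icc_subset_Ici_self)
    have h1 : (∫ u in (0:ℝ)..T, Real.exp (-(θ * u)) * W' u)
        ≤ ∫ u in (0:ℝ)..T, Real.exp (l' * T) * (Real.exp (-((l' + θ) * u)) * W' u) := by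
      apply intervalIntegral.integral_mono_on hT hii1 hii2
      intro u hu
      have h2 : Real.exp (-(θ * u)) ≤ Real.exp (l' * T) * Real.exp (-((l' + θ) * u)) := by
        rw [← Real.exp_add]
        apply Real.exp_le_exp.2
        nlinarith [hu.1, hu.2]
      have h3 := mul_le_mul_of_nonneg_right h2 (hW'nonneg u hu.1)
      exact h3.trans_eq (mul_assoc _ _ _)
    have h4 : (∫ u in (0:ℝ)..T, Real.exp (-((l' + θ) * u)) * W' u) ≤ C0 := by
      rw [intervalIntegral.integral_of_le hT, hC0]
      apply setIntegral_mono_set hC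
      · exact (ae_restrict_iff' measurableSet_Ioi).2 (ae_of_all _ fun u hu =>
          mul_nonneg (Real.exp_pos _).le (hW'nonneg u (mem_Ici.2 (le_of_lt (mem_Ioi.1 hu)))))
      · exact HasSubset.Subset.eventuallyLE Ioc_subset_Ioi_self
    have h5 : (∫ u in (0:ℝ)..T, Real.exp (l' * T) * (Real.exp (-((l' + θ) * u)) * W' u))
        = Real.exp (l' * T) * ∫ u in (0:ℝ)..T, Real.exp (-((l' + θ) * u)) * W' u :=
      intervalIntegral.integral_const_mul _ _
    have h6 := mul_le_mul_of_nonneg_left h4 (Real.exp_pos (l' * T)).le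
    rw [h5] at h1
    linarith
  -- decay of Wθ e^{-l·}
  have hexp0 : ∀ c : ℝ, 0 < c → Tendsto (fun T : ℝ => Real.exp (-(c * T))) atTop (𝓝 0) := by
    intro c hc
    have h1 : Tendsto (fun T : ℝ => c * T) atTop atTop := Tendsto.const_mul_atTop hc tendsto_id
    exact Real.tendsto_exp_neg_atTop_nhds_zero.comp h1
  have hWθdecay : Tendsto (fun T => Wθ T * Real.exp (-(l * T))) atTop (𝓝 0) := by
    have hC0nonneg : 0 ≤ C0 := by
      rw [hC0]
      exact setIntegral_nonneg measurableSet_Ioi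
        (fun u hu => mul_nonneg (Real.exp_pos _).le (hW'nonneg u (mem_Ici.2 (le_of_lt (mem_Ioi.1 hu)))))
    refine squeeze_zero'
      (g := fun T => Real.exp (-(l * T)) + C0 * Real.exp (-((l - l') * T))) ?_ ?_ ?_
    · filter_upwards [eventually_ge_atTop (0:ℝ)] with T hT
      exact mul_nonneg (le_trans zero_le_one (hWθ1 T hT)) (Real.exp_pos _).le
    · filter_upwards [eventually_ge_atTop (0:ℝ)] with T hT
      calc Wθ T * Real.exp (-(l * T))
          ≤ (1 + Real.exp (l' * T) * C0) * Real.exp (-(l * T)) :=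
            mul_le_mul_of_nonneg_right (hWθbound T hT) (Real.exp_pos _).le
        _ = Real.exp (-(l * T)) + C0 * Real.exp (-((l - l') * T)) := by
            rw [add_mul, one_mul, mul_comm (Real.exp (l' * T)) C0, mul_assoc, ← Real.exp_add]
            congr 2
            ring
    · have h1 := hexp0 l hl0
      have h2 := (hexp0 (l - l') (by linarith)).const_mul C0
      simpa using h1.add h2
  -- FTC for Wθ e^{-l·}
  have hmain : ∀ T : ℝ, 0 ≤ T →
      (∫ x in (0:ℝ)..T, (Real.exp (-((l + θ) * x)) * W' x - l * (Wθ x * Real.exp (-(l * x)))))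
        = Real.exp (-(l * T)) * Wθ T - 1 := by
    intro T hT
    have h := intervalIntegral.integral_eq_sub_of_hasDeriv_right_of_le hT
      (f := fun x => Real.exp (-(l * x)) * Wθ x)
      (f' := fun x => Real.exp (-((l + θ) * x)) * W' x - l * (Wθ x * Real.exp (-(l * x))))
      ((hexpc l).continuousOn.mul (hWθcontIcc T hT))
      (by
        intro x hx
        have hd1 : HasDerivAt (fun y : ℝ => Real.exp (-(l * y))) (Real.exp (-(l * x)) * -(l * 1)) x :=
          (((hasDerivAt_id x).const_mul l).neg).exp
        have hd2 := hWθderiv x hx.1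
        have hmul := (hd1.hasDerivWithinAt (s := Ioi x)).mul (hd2.hasDerivWithinAt (s := Ioi x))
        convert hmul using 1
        · rfl
        · rfl
        have he : Real.exp (-((l + θ) * x)) = Real.exp (-(l * x)) * Real.exp (-(θ * x)) := by
          rw [← Real.exp_add]; congr 1; ring
        simp only [he]; ring)
      (by
        apply ContinuousOn.intervalIntegrable
        rw [uIcc_of_le hT]
        exact ((hcontmul (l + θ)).mono Icc_subset_Ici_self).sub
          (continuous_const.continuousOn.mul ((hWθcontIcc T hT).mul (hexpc l).continuousOn)))
    rw [h]
    simp [hWθ 0]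
  have hmainA : ∀ T : ℝ, 0 ≤ T →
      (∫ x in (0:ℝ)..T, Wθ x * Real.exp (-(l * x)))
        = (1 - Real.exp (-(l * T)) * Wθ T
            + ∫ x in (0:ℝ)..T, Real.exp (-((l + θ) * x)) * W' x) / l := by
    intro T hT
    have h1 : IntervalIntegrable (fun x => Real.exp (-((l + θ) * x)) * W' x) volume 0 T := by
      apply ContinuousOn.intervalIntegrable
      rw [uIcc_of_le hT]
      exact (hcontmul (l + θ)).mono Icc_subset_Ici_self
    have h2 : IntervalIntegrable (fun x => l * (Wθ x * Real.exp (-(l * x)))) volume 0 T := by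
      apply ContinuousOn.intervalIntegrable
      rw [uIcc_of_le hT]
      exact continuous_const.continuousOn.mul ((hWθcontIcc T hT).mul (hexpc l).continuousOn)
    have h := hmain T hT
    rw [intervalIntegral.integral_sub h1 h2, intervalIntegral.integral_const_mul] at h
    rw [eq_div_iff (ne_of_gt hl0)]
    linarith
  -- limit of the truncated integrals
  have hA := hW'key (l + θ) hμ
  have hBtend : Tendsto (fun T => ∫ x in (0:ℝ)..T, Wθ x * Real.exp (-(l * x))) atTop
      (𝓝 ((1 - 0 + ((l + θ) * (1 / ψ (l + θ)) - 1)) / l)) := by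
    have hAt : Tendsto (fun T => ∫ x in (0:ℝ)..T, Real.exp (-((l + θ) * x)) * W' x) atTop
        (𝓝 ((l + θ) * (1 / ψ (l + θ)) - 1)) := by
      have := intervalIntegral_tendsto_integral_Ioi 0 hA.1 tendsto_id
      rwa [hA.2] at this
    have hd : Tendsto (fun T => Real.exp (-(l * T)) * Wθ T) atTop (𝓝 0) := by
      simpa [mul_comm] using hWθdecay
    have h := ((tendsto_const_nhds (x := (1:ℝ)) (f := atTop)).sub hd).add hAt
    have hdiv := h.div_const l
    apply hdiv.congr'
    filter_upwards [eventually_ge_atTop (0:ℝ)] with T hT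
    exact (hmainA T hT).symm
  -- integrability and value of the improper integral
  have hfi : ∀ T : ℝ, IntegrableOn (fun x => Wθ x * Real.exp (-(l * x))) (Ioc 0 T) := by
    intro T
    rcases le_or_gt T 0 with h | h
    · rw [Ioc_eq_empty (not_lt.2 h)]; exact integrableOn_empty
    · exact (((hWθcontIcc T h.le).mul (hexpc l).continuousOn).integrableOn_Icc).mono_set
        Ioc_subset_Icc_self
  have hnorm : Tendsto (fun T => ∫ x in (0:ℝ)..T, ‖Wθ x * Real.exp (-(l * x))‖) atTop
      (𝓝 ((1 - 0 + ((l + θ) * (1 / ψ (l + θ)) - 1)) / l)) := by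
    apply hBtend.congr'
    filter_upwards [eventually_ge_atTop (0:ℝ)] with T hT
    apply intervalIntegral.integral_congr
    intro u hu
    rw [uIcc_of_le hT] at hu
    exact (Real.norm_of_nonneg (mul_nonneg (le_trans zero_le_one (hWθ1 u hu.1))
      (Real.exp_pos _).le)).symm
  have hint := integrableOn_Ioi_of_intervalIntegral_norm_tendsto _ 0 hfi tendsto_id hnorm
  have hval := tendsto_nhds_unique (intervalIntegral_tendsto_integral_Ioi 0 hint tendsto_id) hBtend
  rw [hval, hψθ l]
  have hψp := hψpos (l + θ) hμ
  have hlθ : (0:ℝ) < l + θ := by linarith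
  field_simp
  ring
end

section
/- Let b⋆ > d⋆ ≥ 0, set r⋆ = b⋆ − d⋆ > 0 and W⋆(t) = (b⋆ e^{r⋆ t} − d⋆)/r⋆, and let r > r⋆. Set ν = r/r⋆, μ = b⋆/r⋆ and γ = (r − r⋆)/b⋆. Then lim_{j→∞} j^ν · (r − r⋆) ∫_0^∞ (1 − 1/W⋆(t))^{j−1} e^{−(r−r⋆)t} / W⋆(t) dt = γ Γ(ν) μ^ν, where the limit is over integers j → ∞ and Γ is the Gamma function. -/
open MeasureTheory Set Filter

lemma betaIoo (a : ℝ) (ha : 0 < a) (n : ℕ) :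
    ∫ s in Ioo (0:ℝ) 1, s ^ n * (1 - s) ^ (a - 1) =
      ((Nat.factorial n) : ℝ) / ∏ k ∈ Finset.range (n + 1), (a + k) := by
  have key : Complex.betaIntegral ((n : ℂ) + 1) (a : ℂ)
      = ((Nat.factorial n) : ℂ) / ∏ k ∈ Finset.range (n + 1), ((a : ℂ) + k) := by
    rw [← Complex.betaIntegral_symm, Complex.betaIntegral_eval_nat_add_one_right (by simpa using ha) n]
  have h2 : Complex.betaIntegral ((n : ℂ) + 1) (a : ℂ)
      = ((∫ s in Ioo (0:ℝ) 1, s ^ n * (1 - s) ^ (a - 1) : ℝ) : ℂ) := by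
    have hreal : ∫ s in Ioo (0:ℝ) 1, s ^ n * (1 - s) ^ (a - 1)
        = ∫ s in (0:ℝ)..1, s ^ n * (1 - s) ^ (a - 1) := by
      rw [intervalIntegral.integral_of_le zero_le_one, MeasureTheory.integral_Ioc_eq_integral_Ioo]
    rw [Complex.betaIntegral, hreal, ← intervalIntegral.integral_ofReal]
    apply intervalIntegral.integral_congr
    intro x hx
    rw [uIcc_of_le zero_le_one] at hx
    have hx1 : (0:ℝ) ≤ 1 - x := by simp [hx.2]
    have e1 : ((n : ℂ) + 1 - 1) = (n : ℂ) := by ring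
    simp only [e1]
    rw [Complex.cpow_natCast]
    have e2 : ((a : ℂ) - 1) = ((a - 1 : ℝ) : ℂ) := by push_cast; ring
    have e3 : (1 : ℂ) - (x : ℂ) = ((1 - x : ℝ) : ℂ) := by push_cast; ring
    rw [e2, e3, ← Complex.ofReal_cpow hx1]
    push_cast
    ring
  have := key.symm.trans h2
  have hcast : ((((Nat.factorial n) : ℝ) / ∏ k ∈ Finset.range (n + 1), (a + k)) : ℂ)
      = ((Nat.factorial n) : ℂ) / ∏ k ∈ Finset.range (n + 1), ((a : ℂ) + k) := by
    push_cast
    ring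
  rw [← hcast] at this
  exact_mod_cast this.symm


lemma ratio_tendsto : Tendsto (fun j : ℕ => (j : ℝ) / ((j : ℝ) - 1)) atTop (nhds 1) := by
  have h2 : Tendsto (fun j : ℕ => (j : ℝ) - 1) atTop atTop :=
    tendsto_atTop_add_const_right atTop (-1) tendsto_natCast_atTop_atTop
  have h3 : Tendsto (fun j : ℕ => 1 + ((j : ℝ) - 1)⁻¹) atTop (nhds (1 + 0)) :=
    tendsto_const_nhds.add (tendsto_inv_atTop_zero.comp h2)
  rw [add_zero] at h3
  apply h3.congr'
  filter_upwards [eventually_ge_atTop 2] with j hj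
  have hj1 : (1:ℝ) < (j:ℝ) := by exact_mod_cast Nat.lt_of_lt_of_le one_lt_two hj
  have : (j:ℝ) - 1 ≠ 0 := by linarith
  field_simp
  ring

lemma tendsto_main (a : ℝ) (ha : 0 < a) :
    Tendsto (fun j : ℕ => (j : ℝ) ^ a * ∫ s in Ioo (0:ℝ) 1, s ^ (j - 1) * (1 - s) ^ (a - 1))
      atTop (nhds (Real.Gamma a)) := by
  have hgs : Tendsto (fun j : ℕ => Real.GammaSeq a (j - 1)) atTop (nhds (Real.Gamma a)) :=
    (Real.GammaSeq_tendsto_Gamma a).comp (tendsto_sub_atTop_nat 1)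
  have hrat : Tendsto (fun j : ℕ => ((j : ℝ) / ((j : ℝ) - 1)) ^ a) atTop (nhds 1) := by
    have := ratio_tendsto.rpow_const (p := a) (Or.inr ha.le)
    rwa [Real.one_rpow] at this
  have hmul := hrat.mul hgs
  rw [one_mul] at hmul
  apply hmul.congr'
  filter_upwards [eventually_ge_atTop 2] with j hj
  have h1j : 1 ≤ j := le_trans one_le_two hj
  have hcast : ((j - 1 : ℕ) : ℝ) = (j : ℝ) - 1 := by
    rw [Nat.cast_sub h1j, Nat.cast_one]
  have hj1 : (1:ℝ) < (j:ℝ) := by exact_mod_cast Nat.lt_of_lt_of_le one_lt_two hj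
  have hjm : (0:ℝ) < (j:ℝ) - 1 := by linarith
  have hjne : (j:ℝ) - 1 ≠ 0 := ne_of_gt hjm
  rw [betaIoo a ha (j - 1), Real.GammaSeq, hcast]
  have hpow : ((j : ℝ) / ((j : ℝ) - 1)) ^ a * ((j : ℝ) - 1) ^ a = (j : ℝ) ^ a := by
    rw [← Real.mul_rpow (by positivity) hjm.le, div_mul_cancel₀ _ hjne]
  field_simp
  exact hpow

lemma tendsto_err (a : ℝ) (ha : 0 < a) :
    Tendsto (fun j : ℕ => (j : ℝ) ^ a * ∫ s in Ioo (0:ℝ) 1, s ^ (j - 1) * (1 - s) ^ a)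
      atTop (nhds 0) := by
  have h := tendsto_main (a + 1) (by linarith)
  simp only [add_sub_cancel_right] at h
  have h2 : Tendsto (fun j : ℕ => ((j : ℝ))⁻¹) atTop (nhds 0) :=
    tendsto_inv_atTop_zero.comp tendsto_natCast_atTop_atTop
  have hmul := h.mul h2
  rw [mul_zero] at hmul
  apply hmul.congr'
  filter_upwards [eventually_ge_atTop 1] with j hj
  have hj0 : (0:ℝ) < (j:ℝ) := by exact_mod_cast hj
  rw [Real.rpow_add hj0, Real.rpow_one]
  field_simp

theorem tail_asymptotics_supercritical_clonal_case
    (bs ds r : ℝ) (hd : 0 ≤ ds) (hbd : ds < bs)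
    (rs : ℝ) (hrs : rs = bs - ds) (hr : rs < r)
    (Ws : ℝ → ℝ)
    (hWs : ∀ t : ℝ, Ws t = (bs * Real.exp (rs * t) - ds) / rs)
    (ν μ γ : ℝ) (hν : ν = r / rs) (hμ : μ = bs / rs) (hγ : γ = (r - rs) / bs) :
    Tendsto
      (fun j : ℕ => (j : ℝ) ^ ν * ((r - rs) *
        ∫ t in Ioi (0:ℝ),
          (1 - 1 / Ws t) ^ (j - 1) * Real.exp (-((r - rs) * t)) / Ws t))
      atTop (nhds (γ * Real.Gamma ν * μ ^ ν)) := by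
  have hbs : 0 < bs := lt_of_le_of_lt hd hbd
  have hrs0 : 0 < rs := by rw [hrs]; linarith
  have hβ : 0 < r - rs := by linarith
  have hν1 : 1 < ν := by rw [hν, lt_div_iff₀ hrs0]; linarith
  have hν0 : 0 < ν := by linarith
  have hWpos : ∀ t ∈ Ioi (0:ℝ), 1 < Ws t := by
    intro t ht
    rw [hWs, lt_div_iff₀ hrs0, one_mul]
    have h1 : Real.exp 0 < Real.exp (rs * t) := Real.exp_lt_exp.2 (mul_pos hrs0 (mem_Ioi.mp ht))
    rw [Real.exp_zero] at h1
    nlinarith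
  -- derivative of Ws
  have hWs' : ∀ t : ℝ, HasDerivAt Ws (bs * Real.exp (rs * t)) t := by
    intro t
    have h1 : HasDerivAt (fun t : ℝ => rs * t) rs t := by
      simpa using (hasDerivAt_id t).const_mul rs
    have h2 : HasDerivAt (fun t : ℝ => Real.exp (rs * t)) (Real.exp (rs * t) * rs) t :=
      (Real.hasDerivAt_exp (rs * t)).comp t h1
    have h3 := ((h2.const_mul bs).sub_const ds).div_const rs
    have hfun : Ws = fun t => (bs * Real.exp (rs * t) - ds) / rs := funext hWs
    rw [hfun]
    refine h3.congr_deriv ?_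
    rw [div_eq_iff (ne_of_gt hrs0)]
    ring
  have hf' : ∀ t ∈ Ioi (0:ℝ), HasDerivWithinAt (fun t => 1 - 1 / Ws t)
      (bs * Real.exp (rs * t) / (Ws t) ^ 2) (Ioi 0) t := by
    intro t ht
    have hne : Ws t ≠ 0 := by have := hWpos t ht; intro h; rw [h] at this; linarith
    have h4 := ((hWs' t).inv hne).const_sub 1
    have h5 : HasDerivAt (fun t => 1 - 1 / Ws t) (bs * Real.exp (rs * t) / (Ws t) ^ 2) t := by
      simp only [one_div]
      refine h4.congr_deriv ?_
      ring
    exact h5.hasDerivWithinAt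
  have hinj : InjOn (fun t => 1 - 1 / Ws t) (Ioi 0) := by
    intro t1 h1 t2 h2 heq
    simp only at heq
    have w1 := hWpos t1 h1
    have w2 := hWpos t2 h2
    have hWeq : Ws t1 = Ws t2 := by
      have h6 : 1 / Ws t1 = 1 / Ws t2 := by linarith
      field_simp at h6
      exact h6.symm
    rw [hWs t1, hWs t2] at hWeq
    field_simp at hWeq
    have hE : Real.exp (rs * t1) = Real.exp (rs * t2) :=
      mul_left_cancel₀ (ne_of_gt hbs)
        (show bs * Real.exp (rs * t1) = bs * Real.exp (rs * t2) by linarith)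
    exact mul_left_cancel₀ (ne_of_gt hrs0) (Real.exp_injective hE)
  have himg : (fun t => 1 - 1 / Ws t) '' (Ioi 0) = Ioo 0 1 := by
    ext y
    simp only [mem_image, mem_Ioi, mem_Ioo]
    constructor
    · rintro ⟨t, ht, rfl⟩
      have hW := hWpos t ht
      have hW0 : (0:ℝ) < Ws t := by linarith
      constructor
      · have : 1 / Ws t < 1 := by rw [div_lt_one hW0]; linarith
        linarith
      · have : 0 < 1 / Ws t := by positivity
        linarith
    · rintro ⟨hy0, hy1⟩
      have h1y : 0 < 1 - y := by linarith
      have hden : 0 < bs * (1 - y) := by positivity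
      have hnum : 0 < rs + ds * (1 - y) := by positivity
      set A := (rs + ds * (1 - y)) / (bs * (1 - y)) with hA
      have hA0 : 0 < A := by positivity
      have hA1 : 1 < A := by
        rw [hA, lt_div_iff₀ hden, one_mul]
        nlinarith
      refine ⟨(1 / rs) * Real.log A, ?_, ?_⟩
      · have : 0 < Real.log A := Real.log_pos hA1
        positivity
      · have hexp : Real.exp (rs * ((1 / rs) * Real.log A)) = A := by
          rw [show rs * ((1 / rs) * Real.log A) = Real.log A by field_simp]
          exact Real.exp_log hA0
        have hWval : (bs * A - ds) / rs = 1 / (1 - y) := by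
          rw [hA]
          field_simp
          ring
        show 1 - 1 / Ws _ = y
        rw [hWs, hexp, hWval, one_div_one_div]
        ring
  set G : ℝ → ℝ := fun s => (rs + ds * (1 - s)) ^ (-ν) with hG
  have hpt : ∀ j : ℕ, ∀ t ∈ Ioi (0:ℝ),
      |bs * Real.exp (rs * t) / (Ws t) ^ 2| *
        ((1 - 1 / Ws t) ^ (j - 1) * (1 - (1 - 1 / Ws t)) ^ (ν - 1) * G (1 - 1 / Ws t))
      = bs ^ ((1:ℝ) - ν) *
        ((1 - 1 / Ws t) ^ (j - 1) * Real.exp (-((r - rs) * t)) / Ws t) := by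
    intro j t ht
    have hW1 : 1 < Ws t := hWpos t ht
    have hW0 : (0:ℝ) < Ws t := by linarith
    have hE0 : (0:ℝ) < Real.exp (rs * t) := Real.exp_pos _
    have habs : |bs * Real.exp (rs * t) / (Ws t) ^ 2| = bs * Real.exp (rs * t) / (Ws t) ^ 2 :=
      abs_of_pos (by positivity)
    have e1 : 1 - (1 - 1 / Ws t) = 1 / Ws t := by ring
    have e2 : rs + ds * (1 - (1 - 1 / Ws t)) = bs * Real.exp (rs * t) / Ws t := by
      rw [e1, eq_div_iff (ne_of_gt hW0)]
      have := hWs t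
      field_simp at this ⊢
      nlinarith [this]
    have e3 : (1 / Ws t) ^ (ν - 1) = Ws t ^ (1 - ν) := by
      rw [one_div, Real.inv_rpow hW0.le, ← Real.rpow_neg hW0.le]
      ring_nf
    have e4 : (bs * Real.exp (rs * t) / Ws t) ^ (-ν)
        = bs ^ (-ν) * Real.exp (rs * t) ^ (-ν) * Ws t ^ ν := by
      rw [Real.div_rpow (by positivity) hW0.le, Real.mul_rpow hbs.le hE0.le,
        Real.rpow_neg hW0.le ν, div_eq_mul_inv, inv_inv]
    have e5 : Real.exp (rs * t) ^ (-ν) = Real.exp (-(r * t)) := by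
      rw [← Real.exp_mul]
      congr 1
      rw [hν]
      field_simp
    have e6 : Ws t ^ ((1:ℝ) - ν) * Ws t ^ ν = Ws t := by
      rw [← Real.rpow_add hW0]
      norm_num
    have e7 : bs * bs ^ (-ν) = bs ^ ((1:ℝ) - ν) := by
      rw [show bs * bs ^ (-ν) = bs ^ (1:ℝ) * bs ^ (-ν) by rw [Real.rpow_one],
        ← Real.rpow_add hbs, sub_eq_add_neg]
    have e8 : Real.exp (rs * t) * Real.exp (-(r * t)) = Real.exp (-((r - rs) * t)) := by
      rw [← Real.exp_add]
      congr 1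
      ring
    rw [habs]
    simp only [hG]
    rw [e2, e4, e5, e1, e3]
    calc bs * Real.exp (rs * t) / Ws t ^ 2 *
          ((1 - 1 / Ws t) ^ (j - 1) * Ws t ^ (1 - ν) *
            (bs ^ (-ν) * Real.exp (-(r * t)) * Ws t ^ ν))
        = (Ws t ^ ((1:ℝ) - ν) * Ws t ^ ν) * (bs * bs ^ (-ν)) *
            (Real.exp (rs * t) * Real.exp (-(r * t))) * (1 - 1 / Ws t) ^ (j - 1) / Ws t ^ 2 := by
          ring
      _ = Ws t * bs ^ ((1:ℝ) - ν) * Real.exp (-((r - rs) * t)) * (1 - 1 / Ws t) ^ (j - 1) / Ws t ^ 2 := by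
          rw [e6, e7, e8]
      _ = bs ^ ((1:ℝ) - ν) * ((1 - 1 / Ws t) ^ (j - 1) * Real.exp (-((r - rs) * t)) / Ws t) := by
          have : Ws t ≠ 0 := ne_of_gt hW0
          field_simp
  -- substitution
  have hsub : ∀ j : ℕ,
      ∫ s in Ioo (0:ℝ) 1, s ^ (j - 1) * (1 - s) ^ (ν - 1) * G s
        = bs ^ ((1:ℝ) - ν) * ∫ t in Ioi (0:ℝ),
            (1 - 1 / Ws t) ^ (j - 1) * Real.exp (-((r - rs) * t)) / Ws t := by
    intro j
    rw [← himg, integral_image_eq_integral_abs_deriv_smul measurableSet_Ioi hf' hinj,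
      ← MeasureTheory.integral_const_mul]
    apply setIntegral_congr_fun measurableSet_Ioi
    intro t ht
    simp only [smul_eq_mul]
    exact hpt j t ht
  -- continuity and integrability
  have hc2 : Continuous fun s : ℝ => (1 - s) ^ (ν - 1) :=
    (continuous_const.sub continuous_id).rpow_const (fun x => Or.inr (by linarith))
  have hc3 : Continuous fun s : ℝ => (1 - s) ^ ν :=
    (continuous_const.sub continuous_id).rpow_const (fun x => Or.inr hν0.le)
  have hcG : ContinuousOn G (Icc 0 1) := by
    rw [hG]
    apply ContinuousOn.rpow_const
    · exact (continuous_const.add (continuous_const.mul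
        (continuous_const.sub continuous_id))).continuousOn
    · intro s hs
      left
      have h1 : 0 ≤ 1 - s := by simp [hs.2]
      positivity
  have ig1 : ∀ n : ℕ, IntegrableOn (fun s : ℝ => s ^ n * (1 - s) ^ (ν - 1) * G s) (Ioo 0 1) := by
    intro n
    apply ((((continuous_pow n).continuousOn.mul hc2.continuousOn).mul
      hcG).integrableOn_compact isCompact_Icc).mono_set Ioo_subset_Icc_self
  have ig2 : ∀ n : ℕ, IntegrableOn (fun s : ℝ => s ^ n * (1 - s) ^ (ν - 1)) (Ioo 0 1) := by
    intro n
    exact (((continuous_pow n).mul hc2).integrableOn_Icc).mono_set Ioo_subset_Icc_self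
  have ig3 : ∀ n : ℕ, IntegrableOn (fun s : ℝ => s ^ n * (1 - s) ^ ν) (Ioo 0 1) := by
    intro n
    exact (((continuous_pow n).mul hc3).integrableOn_Icc).mono_set Ioo_subset_Icc_self
  -- Lipschitz bound on G
  set K : ℝ := ν * rs ^ (-ν - 1) with hK
  have hK0 : 0 ≤ K := by
    have := Real.rpow_pos_of_pos hrs0 (-ν - 1)
    positivity
  have hGlip : ∀ s ∈ Ioo (0:ℝ) 1, |G s - rs ^ (-ν)| ≤ K * (ds * (1 - s)) := by
    intro s hs
    have h1s : 0 < 1 - s := by linarith [hs.2]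
    have hx1 : rs ≤ rs + ds * (1 - s) := by nlinarith [hs.1, hs.2]
    have hx2 : rs + ds * (1 - s) ≤ rs + ds := by nlinarith [hs.1, hs.2]
    have hmem : rs + ds * (1 - s) ∈ Icc rs (rs + ds) := ⟨hx1, hx2⟩
    have hmem0 : rs ∈ Icc rs (rs + ds) := ⟨le_refl _, by linarith⟩
    have hder : ∀ y ∈ Icc rs (rs + ds), HasDerivWithinAt (fun y : ℝ => y ^ (-ν))
        (-ν * y ^ (-ν - 1)) (Icc rs (rs + ds)) y := by
      intro y hy
      exact (Real.hasDerivAt_rpow_const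
        (Or.inl (ne_of_gt (lt_of_lt_of_le hrs0 hy.1)))).hasDerivWithinAt
    have hbound : ∀ y ∈ Icc rs (rs + ds), ‖-ν * y ^ (-ν - 1)‖ ≤ K := by
      intro y hy
      have hy0 : 0 < y := lt_of_lt_of_le hrs0 hy.1
      have hle : y ^ (-ν - 1) ≤ rs ^ (-ν - 1) :=
        Real.rpow_le_rpow_of_nonpos hrs0 hy.1 (by linarith)
      have hyp : 0 < y ^ (-ν - 1) := Real.rpow_pos_of_pos hy0 _
      rw [Real.norm_eq_abs, abs_mul, abs_neg, abs_of_pos hν0, abs_of_pos hyp, hK]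
      exact mul_le_mul_of_nonneg_left hle hν0.le
    have hmvt := Convex.norm_image_sub_le_of_norm_hasDerivWithin_le hder hbound
      (convex_Icc rs (rs + ds)) hmem0 hmem
    rw [Real.norm_eq_abs, Real.norm_eq_abs] at hmvt
    have h1 : rs + ds * (1 - s) - rs = ds * (1 - s) := by ring
    rw [h1, abs_of_nonneg (by positivity : (0:ℝ) ≤ ds * (1 - s))] at hmvt
    simpa [hG] using hmvt
  -- the key estimate
  have hdiff : ∀ j : ℕ,
      |(∫ s in Ioo (0:ℝ) 1, s ^ (j - 1) * (1 - s) ^ (ν - 1) * G s)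
        - rs ^ (-ν) * ∫ s in Ioo (0:ℝ) 1, s ^ (j - 1) * (1 - s) ^ (ν - 1)|
      ≤ (K * ds) * ∫ s in Ioo (0:ℝ) 1, s ^ (j - 1) * (1 - s) ^ ν := by
    intro j
    have ig4 : IntegrableOn (fun s : ℝ => s ^ (j - 1) * (1 - s) ^ (ν - 1) * G s
        - rs ^ (-ν) * (s ^ (j - 1) * (1 - s) ^ (ν - 1))) (Ioo 0 1) :=
      (ig1 (j - 1)).sub ((ig2 (j - 1)).const_mul _)
    have heq : (∫ s in Ioo (0:ℝ) 1, s ^ (j - 1) * (1 - s) ^ (ν - 1) * G s)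
        - rs ^ (-ν) * ∫ s in Ioo (0:ℝ) 1, s ^ (j - 1) * (1 - s) ^ (ν - 1)
        = ∫ s in Ioo (0:ℝ) 1, (s ^ (j - 1) * (1 - s) ^ (ν - 1) * G s
            - rs ^ (-ν) * (s ^ (j - 1) * (1 - s) ^ (ν - 1))) := by
      rw [← MeasureTheory.integral_const_mul,
        ← MeasureTheory.integral_sub (ig1 (j - 1)) ((ig2 (j - 1)).const_mul _)]
    rw [heq]
    have hpw : ∀ s ∈ Ioo (0:ℝ) 1,
        |s ^ (j - 1) * (1 - s) ^ (ν - 1) * G s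
          - rs ^ (-ν) * (s ^ (j - 1) * (1 - s) ^ (ν - 1))|
        ≤ (K * ds) * (s ^ (j - 1) * (1 - s) ^ ν) := by
      intro s hs
      have hs0 : 0 < s := hs.1
      have h1s : 0 < 1 - s := by linarith [hs.2]
      have hfac : s ^ (j - 1) * (1 - s) ^ (ν - 1) * G s
          - rs ^ (-ν) * (s ^ (j - 1) * (1 - s) ^ (ν - 1))
          = (s ^ (j - 1) * (1 - s) ^ (ν - 1)) * (G s - rs ^ (-ν)) := by ring
      rw [hfac, abs_mul]
      have hnn : 0 ≤ s ^ (j - 1) * (1 - s) ^ (ν - 1) := by positivity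
      rw [abs_of_nonneg hnn]
      calc s ^ (j - 1) * (1 - s) ^ (ν - 1) * |G s - rs ^ (-ν)|
          ≤ s ^ (j - 1) * (1 - s) ^ (ν - 1) * (K * (ds * (1 - s))) :=
            mul_le_mul_of_nonneg_left (hGlip s hs) hnn
        _ = (K * ds) * (s ^ (j - 1) * ((1 - s) ^ (ν - 1) * (1 - s))) := by ring
        _ = (K * ds) * (s ^ (j - 1) * (1 - s) ^ ν) := by
            rw [show (1 - s) ^ (ν - 1) * (1 - s)
              = (1 - s) ^ (ν - 1) * (1 - s) ^ (1:ℝ) by rw [Real.rpow_one],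
              ← Real.rpow_add h1s, sub_add_cancel]
    calc |∫ s in Ioo (0:ℝ) 1, (s ^ (j - 1) * (1 - s) ^ (ν - 1) * G s
            - rs ^ (-ν) * (s ^ (j - 1) * (1 - s) ^ (ν - 1)))|
        ≤ ∫ s in Ioo (0:ℝ) 1, |s ^ (j - 1) * (1 - s) ^ (ν - 1) * G s
            - rs ^ (-ν) * (s ^ (j - 1) * (1 - s) ^ (ν - 1))| := by
          simpa [Real.norm_eq_abs] using
            MeasureTheory.norm_integral_le_integral_norm (μ := volume.restrict (Ioo 0 1))
              (fun s : ℝ => s ^ (j - 1) * (1 - s) ^ (ν - 1) * G s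
                - rs ^ (-ν) * (s ^ (j - 1) * (1 - s) ^ (ν - 1)))
      _ ≤ ∫ s in Ioo (0:ℝ) 1, (K * ds) * (s ^ (j - 1) * (1 - s) ^ ν) :=
          setIntegral_mono_on ig4.abs ((ig3 (j - 1)).const_mul _) measurableSet_Ioo hpw
      _ = (K * ds) * ∫ s in Ioo (0:ℝ) 1, s ^ (j - 1) * (1 - s) ^ ν :=
          MeasureTheory.integral_const_mul _ _
  -- squeeze
  have hmain := tendsto_main ν hν0
  have herr := tendsto_err ν hν0
  have hzer : Tendsto (fun j : ℕ => (j:ℝ) ^ ν * (∫ s in Ioo (0:ℝ) 1,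
        s ^ (j - 1) * (1 - s) ^ (ν - 1) * G s)
      - rs ^ (-ν) * ((j:ℝ) ^ ν * ∫ s in Ioo (0:ℝ) 1, s ^ (j - 1) * (1 - s) ^ (ν - 1)))
      atTop (nhds 0) := by
    have ht : Tendsto (fun j : ℕ => (K * ds) * ((j:ℝ) ^ ν
        * ∫ s in Ioo (0:ℝ) 1, s ^ (j - 1) * (1 - s) ^ ν)) atTop (nhds 0) := by
      have := herr.const_mul (K * ds)
      rwa [mul_zero] at this
    refine squeeze_zero_norm ?_ ht
    · intro j
      have hrw : (j:ℝ) ^ ν * (∫ s in Ioo (0:ℝ) 1, s ^ (j - 1) * (1 - s) ^ (ν - 1) * G s)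
          - rs ^ (-ν) * ((j:ℝ) ^ ν * ∫ s in Ioo (0:ℝ) 1, s ^ (j - 1) * (1 - s) ^ (ν - 1))
          = (j:ℝ) ^ ν * ((∫ s in Ioo (0:ℝ) 1, s ^ (j - 1) * (1 - s) ^ (ν - 1) * G s)
            - rs ^ (-ν) * ∫ s in Ioo (0:ℝ) 1, s ^ (j - 1) * (1 - s) ^ (ν - 1)) := by ring
      rw [Real.norm_eq_abs, hrw, abs_mul, abs_of_nonneg (Real.rpow_nonneg (Nat.cast_nonneg j) ν)]
      calc (j:ℝ) ^ ν * |(∫ s in Ioo (0:ℝ) 1, s ^ (j - 1) * (1 - s) ^ (ν - 1) * G s)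
            - rs ^ (-ν) * ∫ s in Ioo (0:ℝ) 1, s ^ (j - 1) * (1 - s) ^ (ν - 1)|
          ≤ (j:ℝ) ^ ν * ((K * ds) * ∫ s in Ioo (0:ℝ) 1, s ^ (j - 1) * (1 - s) ^ ν) :=
            mul_le_mul_of_nonneg_left (hdiff j) (Real.rpow_nonneg (Nat.cast_nonneg j) ν)
        _ = (K * ds) * ((j:ℝ) ^ ν * ∫ s in Ioo (0:ℝ) 1, s ^ (j - 1) * (1 - s) ^ ν) := by ring
  have hF : Tendsto (fun j : ℕ => (j:ℝ) ^ ν * ∫ s in Ioo (0:ℝ) 1,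
      s ^ (j - 1) * (1 - s) ^ (ν - 1) * G s) atTop (nhds (rs ^ (-ν) * Real.Gamma ν)) := by
    have h := hzer.add (hmain.const_mul (rs ^ (-ν)))
    rw [zero_add] at h
    apply h.congr
    intro j
    ring
  -- final assembly
  have hfun : (fun j : ℕ => (j : ℝ) ^ ν * ((r - rs) *
        ∫ t in Ioi (0:ℝ),
          (1 - 1 / Ws t) ^ (j - 1) * Real.exp (-((r - rs) * t)) / Ws t))
      = fun j : ℕ => ((r - rs) * bs ^ (ν - 1)) * ((j:ℝ) ^ ν * ∫ s in Ioo (0:ℝ) 1,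
          s ^ (j - 1) * (1 - s) ^ (ν - 1) * G s) := by
    funext j
    have hI : (∫ t in Ioi (0:ℝ), (1 - 1 / Ws t) ^ (j - 1) * Real.exp (-((r - rs) * t)) / Ws t)
        = bs ^ (ν - 1) * ∫ s in Ioo (0:ℝ) 1, s ^ (j - 1) * (1 - s) ^ (ν - 1) * G s := by
      rw [hsub j, ← mul_assoc, ← Real.rpow_add hbs,
        show ν - 1 + (1 - ν) = 0 by ring, Real.rpow_zero, one_mul]
    rw [hI]
    ring
  rw [hfun]
  have hfinal := hF.const_mul ((r - rs) * bs ^ (ν - 1))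
  have hcst : ((r - rs) * bs ^ (ν - 1)) * (rs ^ (-ν) * Real.Gamma ν)
      = γ * Real.Gamma ν * μ ^ ν := by
    rw [hγ, hμ, Real.div_rpow hbs.le hrs0.le, Real.rpow_neg hrs0.le,
      Real.rpow_sub hbs, Real.rpow_one]
    have h1 : rs ^ ν ≠ 0 := ne_of_gt (Real.rpow_pos_of_pos hrs0 ν)
    field_simp
  rwa [hcst] at hfinal
end

section
/- Let ν > 0 and C ≥ 0, and let (a_i)_{i ≥ 1} be a nonincreasing sequence of nonnegative real numbers such that ∑_{i ≥ 1} a_i < ∞ and lim_{j→∞} j^ν ∑_{i=j}^∞ a_i = C. Then lim_{i→∞} i^{ν+1} a_i = ν C. -/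
open Filter Finset

theorem tauberian_theorem_for_series
    (ν C : ℝ) (hν : 0 < ν) (hC : 0 ≤ C)
    (a : ℕ → ℝ)
    (hnonneg : ∀ i : ℕ, 1 ≤ i → 0 ≤ a i)
    (hmono : ∀ i : ℕ, 1 ≤ i → a (i + 1) ≤ a i)
    (hsum : Summable (fun i : ℕ => a (i + 1)))
    (htail : Tendsto (fun j : ℕ => (j : ℝ) ^ ν * ∑' k : ℕ, a (j + k))
      atTop (nhds C)) :
    Tendsto (fun i : ℕ => (i : ℝ) ^ (ν + 1) * a i) atTop (nhds (ν * C)) := by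
  classical
  set T : ℕ → ℝ := fun j => ∑' k : ℕ, a (j + k) with hTdef
  have amono : ∀ i j : ℕ, 1 ≤ i → i ≤ j → a j ≤ a i := by
    intro i j h1 hij
    induction j, hij using Nat.le_induction with
    | base => exact le_refl _
    | succ n hn ih => exact (hmono n (h1.trans hn)).trans ih
  have hsummable : ∀ j : ℕ, 1 ≤ j → Summable (fun k : ℕ => a (j + k)) := by
    intro j hj
    have h := (summable_nat_add_iff (j - 1)).2 hsum
    exact h.congr (fun k => by congr 1; omega)
  have hTsplit : ∀ j d : ℕ, 1 ≤ j → T j = (∑ k ∈ range d, a (j + k)) + T (j + d) := by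
    intro j d hj
    have h1 := Summable.sum_add_tsum_nat_add d (hsummable j hj)
    rw [hTdef]
    simp only []
    rw [← h1]
    congr 1
    exact tsum_congr fun k => by congr 1; omega
  -- slope limits
  have hF : Tendsto (fun x : ℝ => ((1 - x) ^ (-ν) - 1) / x) (nhdsWithin 0 (Set.Ioi 0)) (nhds ν) := by
    have h0 : HasDerivAt (fun x : ℝ => 1 - x) (-1) 0 := by
      simpa using (hasDerivAt_id (0:ℝ)).const_sub 1
    have h2 : HasDerivAt (fun y : ℝ => y ^ (-ν)) (-ν * (1:ℝ) ^ (-ν - 1)) ((1:ℝ) - 0) := by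
      simpa using Real.hasDerivAt_rpow_const (p := -ν) (x := (1:ℝ)) (Or.inl one_ne_zero)
    have h1 : HasDerivAt (fun x : ℝ => (1 - x) ^ (-ν)) ν 0 := by
      have h3 := h2.comp 0 h0
      simp only [Function.comp, Real.one_rpow] at h3
      exact h3.congr_deriv (by ring)
    have h4 := hasDerivAt_iff_tendsto_slope.1 h1
    have h5 : Tendsto (slope (fun x : ℝ => (1 - x) ^ (-ν)) 0) (nhdsWithin 0 (Set.Ioi 0)) (nhds ν) :=
      h4.mono_left (nhdsWithin_mono 0 (fun x hx => ne_of_gt hx))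
    refine h5.congr' ?_
    filter_upwards [self_mem_nhdsWithin] with x hx
    simp [slope_def_field, Real.one_rpow]
  have hG : Tendsto (fun x : ℝ => (1 - (1 + x) ^ (-ν)) / x) (nhdsWithin 0 (Set.Ioi 0)) (nhds ν) := by
    have h0 : HasDerivAt (fun x : ℝ => 1 + x) (1) 0 := by
      simpa using (hasDerivAt_id (0:ℝ)).const_add 1
    have h2 : HasDerivAt (fun y : ℝ => y ^ (-ν)) (-ν * (1:ℝ) ^ (-ν - 1)) ((1:ℝ) + 0) := by
      simpa using Real.hasDerivAt_rpow_const (p := -ν) (x := (1:ℝ)) (Or.inl one_ne_zero)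
    have h1 : HasDerivAt (fun x : ℝ => (1 + x) ^ (-ν)) (-ν) 0 := by
      have h3 := h2.comp 0 h0
      simp only [Function.comp, Real.one_rpow] at h3
      exact h3.congr_deriv (by ring)
    have h4 := hasDerivAt_iff_tendsto_slope.1 h1
    have h5 : Tendsto (slope (fun x : ℝ => (1 + x) ^ (-ν)) 0) (nhdsWithin 0 (Set.Ioi 0)) (nhds (-ν)) :=
      h4.mono_left (nhdsWithin_mono 0 (fun x hx => ne_of_gt hx))
    have h6 := h5.neg
    rw [neg_neg] at h6
    refine h6.congr' ?_
    filter_upwards [self_mem_nhdsWithin] with x hx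
    simp [slope_def_field, Real.one_rpow]
    ring
  rw [tendsto_order]
  constructor
  · -- lower bound: ∀ y < ν*C, eventually y < m^(ν+1) a m
    intro y hy
    have hGC : Tendsto (fun x : ℝ => (1 - (1 + x) ^ (-ν)) / x * C) (nhdsWithin 0 (Set.Ioi 0)) (nhds (ν * C)) := hG.mul_const C
    have hev : ∀ᶠ x in nhdsWithin (0:ℝ) (Set.Ioi 0), y < (1 - (1 + x) ^ (-ν)) / x * C :=
      hGC.eventually_const_lt hy
    obtain ⟨δ, hδy, hδ0⟩ : ∃ δ : ℝ, (y < (1 - (1 + δ) ^ (-ν)) / δ * C) ∧ 0 < δ := by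
      obtain ⟨δ, h1, h2⟩ := (hev.and self_mem_nhdsWithin).exists
      exact ⟨δ, h1, h2⟩
    set D : ℕ → ℕ := fun m => ⌈δ * m⌉₊ with hD
    have hDpos : ∀ᶠ m : ℕ in atTop, 1 ≤ D m := by
      filter_upwards [eventually_ge_atTop 1] with m hm
      have hm' : (0:ℝ) < m := by exact_mod_cast hm
      exact Nat.ceil_pos.2 (mul_pos hδ0 hm')
    have hDm : Tendsto (fun m : ℕ => (D m : ℝ) / m) atTop (nhds δ) := by
      apply tendsto_of_tendsto_of_tendsto_of_le_of_le' (g := fun _ : ℕ => δ)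
        (h := fun m : ℕ => δ + 1 / m) tendsto_const_nhds
        (by simpa using (tendsto_const_nhds (x := δ)).add tendsto_one_div_atTop_nhds_zero_nat)
      · filter_upwards [eventually_ge_atTop 1] with m hm
        have hm' : (0:ℝ) < m := by exact_mod_cast hm
        rw [le_div_iff₀ hm']
        exact Nat.le_ceil _
      · filter_upwards [eventually_ge_atTop 1] with m hm
        have hm' : (0:ℝ) < m := by exact_mod_cast hm
        rw [div_le_iff₀ hm']
        have h1 : (⌈δ * m⌉₊ : ℝ) < δ * m + 1 :=
          Nat.ceil_lt_add_one (by positivity)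
        refine le_of_lt ?_
        calc (D m : ℝ) < δ * m + 1 := h1
          _ ≤ (δ + 1/m) * m := by field_simp; exact le_refl _
    have hMD : Tendsto (fun m : ℕ => (m:ℝ) / D m) atTop (nhds (1/δ)) := by
      have h := hDm.inv₀ (ne_of_gt hδ0)
      simpa [inv_div, one_div] using h
    have haddtop : Tendsto (fun m : ℕ => m + D m) atTop atTop :=
      tendsto_atTop_mono (fun m => Nat.le_add_right m (D m)) tendsto_id
    have hu2 : Tendsto (fun m : ℕ => ((m + D m : ℕ):ℝ)^ν * T (m + D m)) atTop (nhds C) :=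
      htail.comp haddtop
    have hratio : Tendsto (fun m : ℕ => (m:ℝ) / ((m + D m : ℕ):ℝ)) atTop (nhds (1/(1+δ))) := by
      have h1 : Tendsto (fun m : ℕ => ((m + D m : ℕ):ℝ) / m) atTop (nhds (1+δ)) := by
        apply Filter.Tendsto.congr' _ (tendsto_const_nhds.add hDm)
        filter_upwards [eventually_ge_atTop 1] with m hm
        have hm' : (0:ℝ) < m := by exact_mod_cast hm
        rw [Nat.cast_add, add_div, div_self (ne_of_gt hm')]
      have h := h1.inv₀ (by positivity)
      simpa [inv_div, one_div] using h
    have hL : Tendsto (fun m : ℕ => ((m:ℝ)/D m) * ((m:ℝ)^ν * T m -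
        ((m:ℝ)/((m + D m : ℕ):ℝ))^ν * (((m + D m : ℕ):ℝ)^ν * T (m + D m)))) atTop
        (nhds ((1/δ) * (C - (1/(1+δ))^ν * C))) :=
      hMD.mul (htail.sub ((hratio.rpow_const (Or.inr hν.le)).mul hu2))
    have hVy : y < (1/δ) * (C - (1/(1+δ))^ν * C) := by
      have e1 : (1/(1+δ))^ν = (1+δ)^(-ν) := by
        rw [one_div, Real.inv_rpow (by positivity), Real.rpow_neg (by positivity)]
      rw [e1]
      calc y < (1 - (1 + δ) ^ (-ν)) / δ * C := hδy
        _ = (1/δ) * (C - (1+δ)^(-ν) * C) := by ring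
    have hLy := hL.eventually_const_lt hVy
    filter_upwards [hDpos, eventually_ge_atTop 1, hLy] with m hm2 hm3 hm4
    refine lt_of_lt_of_le hm4 ?_
    have hmR : (0:ℝ) < (m:ℝ) := by exact_mod_cast hm3
    have hdR : (0:ℝ) < (D m:ℝ) := by exact_mod_cast hm2
    have hpR : (0:ℝ) < ((m + D m : ℕ):ℝ) := by positivity
    have hsum2 : T m - T (m + D m) ≤ (D m : ℝ) * a m := by
      have h1 : T m = (∑ k ∈ range (D m), a (m + k)) + T (m + D m) := hTsplit m (D m) hm3
      have h2 : ∑ k ∈ range (D m), a (m + k) ≤ (D m : ℝ) * a m := by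
        have h3 := Finset.sum_le_card_nsmul (range (D m)) (fun k => a (m + k)) (a m)
          (fun k _ => amono m (m + k) hm3 (Nat.le_add_right _ _))
        simpa [nsmul_eq_mul] using h3
      linarith [h1.ge, h1.le]
    have e2 : ((m:ℝ)/((m + D m : ℕ):ℝ))^ν = (m:ℝ)^ν / ((m + D m : ℕ):ℝ)^ν :=
      Real.div_rpow hmR.le hpR.le ν
    have e4 : (m:ℝ)^ν / ((m + D m : ℕ):ℝ)^ν * (((m + D m : ℕ):ℝ)^ν * T (m + D m))
        = (m:ℝ)^ν * T (m + D m) := by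
      field_simp
    have e3 : (m:ℝ)^(ν+1) = (m:ℝ)^ν * m := Real.rpow_add_one (ne_of_gt hmR) ν
    rw [e2, e4, e3, div_mul_eq_mul_div, div_le_iff₀ hdR]
    nlinarith [mul_le_mul_of_nonneg_left hsum2
      (show (0:ℝ) ≤ (m:ℝ) * (m:ℝ)^ν by positivity)]
  · -- upper bound
    intro y hy
    have hFC : Tendsto (fun x : ℝ => ((1 - x) ^ (-ν) - 1) / x * C) (nhdsWithin 0 (Set.Ioi 0)) (nhds (ν * C)) := hF.mul_const C
    have hev : ∀ᶠ x in nhdsWithin (0:ℝ) (Set.Ioi 0), ((1 - x) ^ (-ν) - 1) / x * C < y :=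
      hFC.eventually_lt_const hy
    have hev1 : ∀ᶠ x in nhdsWithin (0:ℝ) (Set.Ioi 0), x < 1 := by
      apply eventually_nhdsWithin_of_eventually_nhds
      exact Filter.Tendsto.eventually_lt_const one_pos tendsto_id
    obtain ⟨δ, hδy, hδ1, hδ0⟩ : ∃ δ : ℝ,
        (((1 - δ) ^ (-ν) - 1) / δ * C < y) ∧ δ < 1 ∧ 0 < δ := by
      obtain ⟨δ, ⟨h1, h2⟩, h3⟩ := ((hev.and hev1).and self_mem_nhdsWithin).exists
      exact ⟨δ, h1, h2, h3⟩
    have hδ0' : (0:ℝ) < 1 - δ := by linarith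
    set D : ℕ → ℕ := fun m => ⌈δ * m⌉₊ with hD
    have hkey : ∀ c : ℕ, ∀ᶠ m : ℕ in atTop, D m + c ≤ m := by
      intro c
      have h1 : Tendsto (fun m : ℕ => (1 - δ) * m) atTop atTop :=
        (tendsto_natCast_atTop_atTop).const_mul_atTop hδ0'
      filter_upwards [h1.eventually_ge_atTop ((c:ℝ) + 1)] with m hm
      have hmc : c + 1 ≤ m := by
        have h2 : (c:ℝ) + 1 ≤ (m:ℝ) := by nlinarith [mul_nonneg hδ0.le (Nat.cast_nonneg m)]
        exact_mod_cast h2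
      have h3 : D m ≤ m - c := by
        apply Nat.ceil_le.2
        have h4 : ((m - c : ℕ):ℝ) = (m:ℝ) - c := by
          rw [Nat.cast_sub (by omega)]
        rw [h4]
        nlinarith
      omega
    have hDpos : ∀ᶠ m : ℕ in atTop, 1 ≤ D m := by
      filter_upwards [eventually_ge_atTop 1] with m hm
      have hm' : (0:ℝ) < m := by exact_mod_cast hm
      exact Nat.ceil_pos.2 (mul_pos hδ0 hm')
    have hDm : Tendsto (fun m : ℕ => (D m : ℝ) / m) atTop (nhds δ) := by
      apply tendsto_of_tendsto_of_tendsto_of_le_of_le' (g := fun _ : ℕ => δ)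
        (h := fun m : ℕ => δ + 1 / m) tendsto_const_nhds
        (by simpa using (tendsto_const_nhds (x := δ)).add tendsto_one_div_atTop_nhds_zero_nat)
      · filter_upwards [eventually_ge_atTop 1] with m hm
        have hm' : (0:ℝ) < m := by exact_mod_cast hm
        rw [le_div_iff₀ hm']
        exact Nat.le_ceil _
      · filter_upwards [eventually_ge_atTop 1] with m hm
        have hm' : (0:ℝ) < m := by exact_mod_cast hm
        rw [div_le_iff₀ hm']
        have h1 : (⌈δ * m⌉₊ : ℝ) < δ * m + 1 :=
          Nat.ceil_lt_add_one (by positivity)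
        refine le_of_lt ?_
        calc (D m : ℝ) < δ * m + 1 := h1
          _ ≤ (δ + 1/m) * m := by field_simp; exact le_refl _
    have hMD : Tendsto (fun m : ℕ => (m:ℝ) / D m) atTop (nhds (1/δ)) := by
      have h := hDm.inv₀ (ne_of_gt hδ0)
      simpa [inv_div, one_div] using h
    have hsubtop : Tendsto (fun m : ℕ => m - D m) atTop atTop := by
      apply tendsto_atTop.2 fun b => ?_
      filter_upwards [hkey b] with m hm
      omega
    have hu1 : Tendsto (fun m : ℕ => ((m - D m : ℕ):ℝ)^ν * T (m - D m)) atTop (nhds C) :=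
      htail.comp hsubtop
    have hratio : Tendsto (fun m : ℕ => (m:ℝ) / ((m - D m : ℕ):ℝ)) atTop (nhds (1/(1-δ))) := by
      have h1 : Tendsto (fun m : ℕ => ((m - D m : ℕ):ℝ) / m) atTop (nhds (1-δ)) := by
        apply Filter.Tendsto.congr' _ (tendsto_const_nhds.sub hDm)
        filter_upwards [hkey 0, eventually_ge_atTop 1] with m hm hm1
        have hm' : (0:ℝ) < m := by exact_mod_cast hm1
        rw [Nat.cast_sub (by omega), sub_div, div_self (ne_of_gt hm')]
      have h := h1.inv₀ (ne_of_gt hδ0')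
      simpa [inv_div, one_div] using h
    have hU : Tendsto (fun m : ℕ => ((m:ℝ)/D m) *
        (((m:ℝ)/((m - D m : ℕ):ℝ))^ν * (((m - D m : ℕ):ℝ)^ν * T (m - D m))
          - (m:ℝ)^ν * T m)) atTop
        (nhds ((1/δ) * ((1/(1-δ))^ν * C - C))) :=
      hMD.mul (((hratio.rpow_const (Or.inr hν.le)).mul hu1).sub htail)
    have hVy : (1/δ) * ((1/(1-δ))^ν * C - C) < y := by
      have e1 : (1/(1-δ))^ν = (1-δ)^(-ν) := by
        rw [one_div, Real.inv_rpow hδ0'.le, Real.rpow_neg hδ0'.le]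
      rw [e1]
      calc (1/δ) * ((1-δ)^(-ν) * C - C) = ((1 - δ) ^ (-ν) - 1) / δ * C := by ring
        _ < y := hδy
    have hUy := hU.eventually_lt_const hVy
    filter_upwards [hkey 1, hDpos, eventually_ge_atTop 1, hUy] with m hm1 hm2 hm3 hm4
    refine lt_of_le_of_lt ?_ hm4
    have hj1 : 1 ≤ m - D m := by omega
    have hjd : (m - D m) + D m = m := by omega
    have hjR : (0:ℝ) < ((m - D m : ℕ):ℝ) := by exact_mod_cast hj1
    have hmR : (0:ℝ) < (m:ℝ) := by exact_mod_cast hm3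
    have hdR : (0:ℝ) < (D m:ℝ) := by exact_mod_cast hm2
    have hsum1 : (D m : ℝ) * a m ≤ T (m - D m) - T m := by
      have h1 : T (m - D m) = (∑ k ∈ range (D m), a ((m - D m) + k)) + T m := by
        have h := hTsplit (m - D m) (D m) hj1
        rwa [hjd] at h
      have h2 : (D m : ℝ) * a m ≤ ∑ k ∈ range (D m), a ((m - D m) + k) := by
        have h3 := Finset.card_nsmul_le_sum (range (D m)) (fun k => a ((m - D m) + k)) (a m)
          (fun k hk => by
            have hk' : k ≤ D m := le_of_lt (Finset.mem_range.1 hk)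
            have := amono ((m - D m) + k) ((m - D m) + D m) (by omega) (by omega)
            rwa [hjd] at this)
        simpa [nsmul_eq_mul] using h3
      linarith [h1.ge, h1.le]
    have e2 : ((m:ℝ)/((m - D m : ℕ):ℝ))^ν = (m:ℝ)^ν / ((m - D m : ℕ):ℝ)^ν :=
      Real.div_rpow hmR.le hjR.le ν
    have e4 : (m:ℝ)^ν / ((m - D m : ℕ):ℝ)^ν * (((m - D m : ℕ):ℝ)^ν * T (m - D m))
        = (m:ℝ)^ν * T (m - D m) := by
      field_simp
    have e3 : (m:ℝ)^(ν+1) = (m:ℝ)^ν * m := Real.rpow_add_one (ne_of_gt hmR) ν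
    rw [e2, e4, e3, div_mul_eq_mul_div, le_div_iff₀ hdR]
    nlinarith [mul_le_mul_of_nonneg_left hsum1
      (show (0:ℝ) ≤ (m:ℝ) * (m:ℝ)^ν by positivity)]
end

section
/- Let b⋆ > d⋆ ≥ 0, set r⋆ = b⋆ − d⋆ > 0 and W⋆(u) = (b⋆ e^{r⋆ u} − d⋆)/r⋆, and let r > r⋆. Set ν = r/r⋆, μ = b⋆/r⋆ and γ = (r − r⋆)/b⋆, and for integers i ≥ 1 define J^i = (r − r⋆) ∫_0^∞ (1 − 1/W⋆(u))^{i−1} e^{−(r−r⋆)u} W⋆(u)^{−2} du. Then lim_{i→∞} i^{1+ν} J^i = γ Γ(ν + 1) μ^ν, i.e., J^i ∼ i^{−1−ν} γ Γ(ν+1) μ^ν as i → ∞. -/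
open MeasureTheory Set Filter

lemma cov_key (bs ds r rs ν : ℝ) (hd : 0 ≤ ds) (hbd : ds < bs)
    (hrs : rs = bs - ds) (hr : rs < r) (hν : ν = r / rs) (n : ℕ) (hn : 1 ≤ n) :
    ∫ s in Ioo (0:ℝ) (n:ℝ),
        (1 - s/(n:ℝ))^(n-1) * s^ν * (rs + ds*s/(n:ℝ))^(-ν)
      = ((n:ℝ)^(1+ν) * bs^(1-ν)) * ∫ u in Ioi (0:ℝ),
        (1 - 1 / ((bs * Real.exp (rs*u) - ds)/rs)) ^ (n - 1)
          * Real.exp (-((r - rs) * u)) / ((bs * Real.exp (rs*u) - ds)/rs) ^ 2 := by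
  have hb0 : 0 < bs := lt_of_le_of_lt hd hbd
  have hrs0 : 0 < rs := by rw [hrs]; linarith
  have hν0 : 0 < ν := by rw [hν]; exact div_pos (by linarith) hrs0
  have hrν : rs * ν = r := by rw [hν]; field_simp
  have hN0 : (0:ℝ) < (n:ℝ) := by exact_mod_cast hn
  set N : ℝ := (n:ℝ) with hNdef
  set φ : ℝ → ℝ := fun u => N * rs / (bs * Real.exp (rs * u) - ds) with hφ
  set φ' : ℝ → ℝ :=
    fun u => -(N * rs^2 * bs * Real.exp (rs*u)) / (bs * Real.exp (rs*u) - ds)^2 with hφ'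
  have hE1 : ∀ u : ℝ, 0 < u → 1 < Real.exp (rs*u) := fun u hu =>
    lt_of_lt_of_le (by nlinarith) (Real.add_one_le_exp (rs*u))
  have hD0 : ∀ u : ℝ, 0 < u → 0 < bs * Real.exp (rs*u) - ds := by
    intro u hu; have := hE1 u hu; nlinarith
  have hder : ∀ u ∈ Ioi (0:ℝ), HasDerivWithinAt φ (φ' u) (Ioi 0) u := by
    intro u hu
    have hD := hD0 u hu
    have h0 : HasDerivAt (fun x : ℝ => rs * x) rs u := by
      simpa using (hasDerivAt_id u).const_mul rs
    have h1 : HasDerivAt (fun x : ℝ => bs * Real.exp (rs * x) - ds)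
        (bs * (Real.exp (rs*u) * rs)) u := (h0.exp.const_mul bs).sub_const ds
    have h2 := (hasDerivAt_const u (N*rs)).div h1 hD.ne'
    have h3 : φ' u = (0 * (bs * Real.exp (rs*u) - ds) - N * rs * (bs * (Real.exp (rs*u) * rs)))
        / (bs * Real.exp (rs*u) - ds)^2 := by simp only [hφ']; ring
    rw [h3]
    exact h2.hasDerivWithinAt
  have hinj : InjOn φ (Ioi (0:ℝ)) := by
    intro x hx y hy h
    have hDx := hD0 x hx
    have hDy := hD0 y hy
    simp only [hφ] at h
    rw [div_eq_div_iff hDx.ne' hDy.ne'] at h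
    have hNrs : N * rs ≠ 0 := by positivity
    have hE : Real.exp (rs*x) = Real.exp (rs*y) := by
      have h4 := mul_left_cancel₀ hNrs h
      have h5 : bs * Real.exp (rs*x) = bs * Real.exp (rs*y) := by linarith
      exact mul_left_cancel₀ hb0.ne' h5
    have := Real.exp_injective hE
    exact mul_left_cancel₀ hrs0.ne' this
  have himg : φ '' (Ioi (0:ℝ)) = Ioo 0 N := by
    apply Subset.antisymm
    · rintro _ ⟨u, hu, rfl⟩
      have hD := hD0 u hu
      have hE := hE1 u hu
      constructor
      · simp only [hφ]; positivity
      · simp only [hφ]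
        rw [div_lt_iff₀ hD]
        nlinarith [mul_lt_mul_of_pos_left (show rs < bs*Real.exp (rs*u) - ds by nlinarith) hN0]
    · rintro s ⟨hs0, hsN⟩
      have hX1 : 1 < (rs*N + ds*s)/(bs*s) := by
        rw [lt_div_iff₀ (by positivity)]
        nlinarith
      have hX0 : 0 < (rs*N + ds*s)/(bs*s) := lt_trans zero_lt_one hX1
      refine ⟨(1/rs) * Real.log ((rs*N + ds*s)/(bs*s)), ?_, ?_⟩
      · have := Real.log_pos hX1
        have : 0 < (1/rs) * Real.log ((rs*N + ds*s)/(bs*s)) := by positivity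
        exact this
      · have hexp : Real.exp (rs * ((1/rs) * Real.log ((rs*N + ds*s)/(bs*s))))
            = (rs*N + ds*s)/(bs*s) := by
          rw [show rs * ((1/rs) * Real.log ((rs*N + ds*s)/(bs*s)))
              = Real.log ((rs*N + ds*s)/(bs*s)) by field_simp]
          exact Real.exp_log hX0
        simp only [hφ]
        rw [hexp]
        have hden : bs * ((rs*N + ds*s)/(bs*s)) - ds = rs * N / s := by
          field_simp; ring
        rw [hden]
        field_simp
  have hchg : ∫ s in Ioo (0:ℝ) N,
      (1 - s/N)^(n-1) * s^ν * (rs + ds*s/N)^(-ν)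
      = ∫ u in Ioi (0:ℝ), |φ' u| • ((1 - (φ u)/N)^(n-1) * (φ u)^ν * (rs + ds*(φ u)/N)^(-ν)) := by
    rw [← himg]
    exact integral_image_eq_integral_abs_deriv_smul measurableSet_Ioi hder hinj _
  rw [hchg]
  rw [← MeasureTheory.integral_const_mul]
  apply setIntegral_congr_fun measurableSet_Ioi
  intro u hu
  have hu' : 0 < u := hu
  have hE := hE1 u hu'
  have hE0 : 0 < Real.exp (rs*u) := Real.exp_pos _
  have hD := hD0 u hu'
  set E : ℝ := Real.exp (rs*u) with hEdef
  set D : ℝ := bs * E - ds with hDdef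
  have habs : |φ' u| = N * rs^2 * bs * E / D^2 := by
    simp only [hφ']
    rw [abs_div, abs_neg, abs_of_pos (by positivity), abs_of_pos (by positivity)]
  have hφu : φ u = N*rs/D := rfl
  have hA : 1 - (φ u)/N = 1 - rs/D := by rw [hφu]; field_simp
  have hB : rs + ds*(φ u)/N = rs*(bs*E)/D := by rw [hφu]; field_simp; ring
  have hDrs : rs < D := by simp only [hDdef]; nlinarith
  dsimp only
  rw [smul_eq_mul, habs, hA, hB, hφu, one_div_div]
  have e1 : (N*rs/D)^ν = N^ν*rs^ν/D^ν := by
    rw [Real.div_rpow (by positivity) hD.le, Real.mul_rpow hN0.le hrs0.le]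
  have e2 : (rs*(bs*E)/D)^(-ν) = (rs^ν*(bs^ν*E^ν)/D^ν)⁻¹ := by
    rw [Real.rpow_neg (by positivity), Real.div_rpow (by positivity) hD.le,
      Real.mul_rpow hrs0.le (by positivity), Real.mul_rpow hb0.le hE0.le]
  have e3 : N^(1+ν) = N*N^ν := by rw [Real.rpow_add hN0, Real.rpow_one]
  have e4 : bs^(1-ν) = bs/bs^ν := by rw [Real.rpow_sub hb0, Real.rpow_one]
  have e5 : Real.exp (-((r-rs)*u)) = E/E^ν := by
    have h5 : -((r-rs)*u) = rs*u*(1-ν) := by linear_combination u * hrν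
    rw [h5, Real.exp_mul, ← hEdef, Real.rpow_sub hE0, Real.rpow_one]
  rw [e1, e2, e3, e4, e5]
  have p1 : (0:ℝ) < N^ν := Real.rpow_pos_of_pos hN0 ν
  have p2 : (0:ℝ) < rs^ν := Real.rpow_pos_of_pos hrs0 ν
  have p3 : (0:ℝ) < bs^ν := Real.rpow_pos_of_pos hb0 ν
  have p4 : (0:ℝ) < E^ν := Real.rpow_pos_of_pos hE0 ν
  have p5 : (0:ℝ) < D^ν := Real.rpow_pos_of_pos hD ν
  simp only [← hEdef, ← hDdef]
  generalize (1 - rs/D)^(n-1) = P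
  field_simp


lemma dct_key (ds rs ν : ℝ) (hd : 0 ≤ ds) (hrs0 : 0 < rs) (hν0 : 0 < ν) :
    Tendsto (fun n : ℕ => ∫ s in Ioo (0:ℝ) (n:ℝ),
      (1 - s/(n:ℝ))^(n-1) * s^ν * (rs + ds*s/(n:ℝ))^(-ν)) atTop
      (nhds (Real.Gamma (ν+1) * rs^(-ν))) := by
  set g : ℕ → ℝ → ℝ :=
    fun n s => (1 - s/(n:ℝ))^(n-1) * s^ν * (rs + ds*s/(n:ℝ))^(-ν) with hg
  set G : ℕ → ℝ → ℝ := fun n => (Ioo (0:ℝ) (n:ℝ)).indicator (g n) with hG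
  have hrw : ∀ n : ℕ, ∫ s in Ioo (0:ℝ) (n:ℝ), g n s
      = ∫ s in Ioi (0:ℝ), G n s := by
    intro n
    rw [hG]
    rw [MeasureTheory.integral_indicator measurableSet_Ioo, Measure.restrict_restrict
      measurableSet_Ioo, inter_eq_left.mpr (Ioo_subset_Ioi_self)]
  have hlim : ∫ s in Ioi (0:ℝ), Real.exp (-s) * s^ν * rs^(-ν)
      = Real.Gamma (ν+1) * rs^(-ν) := by
    rw [MeasureTheory.integral_mul_const, Real.Gamma_eq_integral (by linarith : (0:ℝ) < ν+1)]
    norm_num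
  have main : Tendsto (fun n : ℕ => ∫ s in Ioi (0:ℝ), G n s) atTop
      (nhds (∫ s in Ioi (0:ℝ), Real.exp (-s) * s^ν * rs^(-ν))) := by
    apply MeasureTheory.tendsto_integral_filter_of_dominated_convergence
      (fun s => s^ν * Real.exp (-(1/2) * s) * rs^(-ν))
    · apply Eventually.of_forall
      intro n
      apply AEStronglyMeasurable.indicator _ measurableSet_Ioo
      apply Measurable.aestronglyMeasurable
      fun_prop
    · filter_upwards [eventually_ge_atTop 2] with n hn2
      rw [ae_restrict_iff' measurableSet_Ioi]
      apply Eventually.of_forall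
      intro s hs
      have hs0 : 0 < s := hs
      simp only [hG]
      by_cases hmem : s ∈ Ioo (0:ℝ) (n:ℝ)
      · rw [indicator_of_mem hmem]
        have hsN : s < (n:ℝ) := hmem.2
        have hn0 : (0:ℝ) < n := lt_trans hs0 hsN
        have h1N : 0 ≤ 1 - s/(n:ℝ) := by
          rw [sub_nonneg, div_le_one hn0]; exact hsN.le
        have hbase : 0 < rs + ds*s/(n:ℝ) := by positivity
        have hgnn : 0 ≤ g n s := by
          rw [hg]
          have := Real.rpow_nonneg hs0.le ν
          positivity
        rw [Real.norm_eq_abs, abs_of_nonneg hgnn, hg]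
        have hT1 : (1 - s/(n:ℝ))^(n-1) ≤ Real.exp (-(1/2) * s) := by
          have h2 : 1 - s/(n:ℝ) ≤ Real.exp (-(s/(n:ℝ))) := by
            have := Real.add_one_le_exp (-(s/(n:ℝ))); linarith
          calc (1 - s/(n:ℝ))^(n-1) ≤ (Real.exp (-(s/(n:ℝ))))^(n-1) :=
                pow_le_pow_left₀ h1N h2 (n-1)
            _ = Real.exp (((n:ℝ)-1) * (-(s/(n:ℝ)))) := by
                rw [← Real.exp_nat_mul]
                congr 1
                rw [Nat.cast_sub (by linarith : 1 ≤ n)]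
                norm_num
            _ ≤ Real.exp (-(1/2) * s) := by
                apply Real.exp_le_exp.2
                have h2n : (2:ℝ) ≤ n := by exact_mod_cast hn2
                have e1 : ((n:ℝ)-1) * (s/(n:ℝ)) = s - s/(n:ℝ) := by field_simp
                have e2 : s/(n:ℝ) ≤ s/2 := div_le_div_of_nonneg_left hs0.le two_pos h2n
                nlinarith [e1, e2]
        have hT3 : (rs + ds*s/(n:ℝ))^(-ν) ≤ rs^(-ν) := by
          rw [Real.rpow_neg hbase.le, Real.rpow_neg hrs0.le]
          apply inv_anti₀ (Real.rpow_pos_of_pos hrs0 ν)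
          exact Real.rpow_le_rpow hrs0.le (le_add_of_nonneg_right (by positivity)) hν0.le
        calc (1 - s/(n:ℝ))^(n-1) * s^ν * (rs + ds*s/(n:ℝ))^(-ν)
            ≤ Real.exp (-(1/2) * s) * s^ν * rs^(-ν) := by
              have m1 : (1 - s/(n:ℝ))^(n-1) * s^ν ≤ Real.exp (-(1/2)*s) * s^ν :=
                mul_le_mul_of_nonneg_right hT1 (Real.rpow_nonneg hs0.le ν)
              exact mul_le_mul m1 hT3 (Real.rpow_nonneg hbase.le (-ν))
                (mul_nonneg (Real.exp_pos _).le (Real.rpow_nonneg hs0.le ν))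
          _ = s^ν * Real.exp (-(1/2) * s) * rs^(-ν) := by ring
      · rw [indicator_of_notMem hmem, norm_zero]
        have : 0 ≤ s^ν := Real.rpow_nonneg hs0.le ν
        positivity
    · apply Integrable.mul_const
      have h := integrableOn_rpow_mul_exp_neg_mul_rpow
        (show (-1:ℝ) < ν by linarith) (show (0:ℝ) < 1 by norm_num) (show (0:ℝ) < 1/2 by norm_num)
      simpa [Real.rpow_one, IntegrableOn] using h
    · rw [ae_restrict_iff' measurableSet_Ioi]
      apply Eventually.of_forall
      intro s hs
      have hs0 : 0 < s := hs
      have hev : ∀ᶠ n : ℕ in atTop, G n s = (1 - s/(n:ℝ))^(n-1) * s^ν * (rs + ds*s/(n:ℝ))^(-ν) := by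
        filter_upwards [eventually_gt_atTop ⌈s⌉₊] with n hn
        have hsn : s < (n:ℝ) := lt_of_le_of_lt (Nat.le_ceil s) (by exact_mod_cast hn)
        have hmem : s ∈ Ioo (0:ℝ) (n:ℝ) := ⟨hs0, hsn⟩
        rw [hG]
        dsimp only
        rw [indicator_of_mem hmem]
      rw [tendsto_congr' hev]
      have t1 : Tendsto (fun n : ℕ => (1 - s/(n:ℝ))^(n-1)) atTop (nhds (Real.exp (-s))) := by
        have a := Real.tendsto_one_add_div_pow_exp (-s)
        have b : Tendsto (fun n : ℕ => (1 + (-s)/(n:ℝ))) atTop (nhds 1) := by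
          have h0 := tendsto_const_div_atTop_nhds_zero_nat (-s)
          simpa using tendsto_const_nhds.add h0
        have c := a.div b one_ne_zero
        simp only [div_one] at c
        apply c.congr'
        filter_upwards [eventually_gt_atTop ⌈s⌉₊, eventually_ge_atTop 1] with n hn hn1
        have hn0 : (0:ℝ) < n := by exact_mod_cast Nat.lt_of_lt_of_le Nat.zero_lt_one hn1
        have hsn : s < (n:ℝ) := lt_of_le_of_lt (Nat.le_ceil s) (by exact_mod_cast hn)
        have hpos : 0 < 1 + (-s)/(n:ℝ) := by
          rw [neg_div]
          have : s/(n:ℝ) < 1 := (div_lt_one hn0).2 hsn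
          linarith
        simp only [Pi.div_apply]
        rw [show (1:ℝ) + (-s)/(n:ℝ) = 1 - s/(n:ℝ) by ring,
          pow_sub₀ (1 - s/(n:ℝ)) (by rw [show (1:ℝ) - s/(n:ℝ) = 1 + (-s)/(n:ℝ) by ring]; exact hpos.ne') hn1,
          pow_one, div_eq_mul_inv]
      have t3 : Tendsto (fun n : ℕ => (rs + ds*s/(n:ℝ))^(-ν)) atTop (nhds (rs^(-ν))) := by
        have b : Tendsto (fun n : ℕ => rs + ds*s/(n:ℝ)) atTop (nhds rs) := by
          have h0 := tendsto_const_div_atTop_nhds_zero_nat (ds*s)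
          simpa using tendsto_const_nhds.add h0
        exact b.rpow_const (Or.inl hrs0.ne')
      exact (t1.mul tendsto_const_nhds).mul t3
  rw [hlim] at main
  apply main.congr'
  filter_upwards with n
  exact (hrw n).symm


theorem limiting_frequency_spectrum_asymptotics_supercritical
    (bs ds r : ℝ) (hd : 0 ≤ ds) (hbd : ds < bs)
    (rs : ℝ) (hrs : rs = bs - ds) (hr : rs < r)
    (Ws : ℝ → ℝ)
    (hWs : ∀ u : ℝ, Ws u = (bs * Real.exp (rs * u) - ds) / rs)
    (ν μ γ : ℝ) (hν : ν = r / rs) (hμ : μ = bs / rs) (hγ : γ = (r - rs) / bs)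
    (J : ℕ → ℝ)
    (hJ : ∀ i : ℕ, 1 ≤ i → J i = (r - rs) *
      ∫ u in Ioi (0:ℝ),
        (1 - 1 / Ws u) ^ (i - 1) * Real.exp (-((r - rs) * u)) / (Ws u) ^ 2) :
    Tendsto (fun i : ℕ => (i : ℝ) ^ (1 + ν) * J i) atTop
      (nhds (γ * Real.Gamma (ν + 1) * μ ^ ν)) := by
  have hb0 : 0 < bs := lt_of_le_of_lt hd hbd
  have hrs0 : 0 < rs := by rw [hrs]; linarith
  have hν0 : 0 < ν := by rw [hν]; exact div_pos (by linarith) hrs0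
  have hbb : bs^(ν-1) * bs^(1-ν) = 1 := by
    rw [← Real.rpow_add hb0]; norm_num
  have key : ∀ n : ℕ, 1 ≤ n → (n:ℝ)^(1+ν) * J n = (r - rs) * bs^(ν-1) *
      ∫ s in Ioo (0:ℝ) (n:ℝ), (1 - s/(n:ℝ))^(n-1) * s^ν * (rs + ds*s/(n:ℝ))^(-ν) := by
    intro n hn
    have hcov := cov_key bs ds r rs ν hd hbd hrs hr hν n hn
    rw [hJ n hn]
    simp only [hWs]
    rw [hcov]
    linear_combination (-((r - rs) * (n:ℝ) ^ (1 + ν)) *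
      (∫ u in Ioi (0:ℝ), (1 - 1 / ((bs * Real.exp (rs*u) - ds)/rs)) ^ (n - 1)
        * Real.exp (-((r - rs) * u)) / ((bs * Real.exp (rs*u) - ds)/rs) ^ 2)) * hbb
  have hval : (r - rs) * bs^(ν-1) * (Real.Gamma (ν+1) * rs^(-ν))
      = γ * Real.Gamma (ν + 1) * μ ^ ν := by
    rw [hγ, hμ]
    rw [Real.rpow_neg hrs0.le]
    rw [Real.div_rpow hb0.le hrs0.le]
    rw [show bs^(ν-1) = bs^ν/bs by rw [Real.rpow_sub hb0, Real.rpow_one]]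
    have p2 : rs^ν ≠ 0 := (Real.rpow_pos_of_pos hrs0 ν).ne'
    field_simp
  have final := (dct_key ds rs ν hd hrs0 hν0).const_mul ((r - rs) * bs^(ν-1))
  rw [← hval]
  apply Tendsto.congr' _ final
  filter_upwards [eventually_ge_atTop 1] with n hn
  exact (key n hn).symm
end

section
/- Let b⋆ > 0, d⋆ > b⋆, set r⋆ = b⋆ − d⋆ < 0 and W⋆(x) = (b⋆ e^{r⋆ x} − d⋆)/r⋆, let r > 0, and for t > 0 set c_t = r t/(r − r⋆). Then for every a ∈ ℝ, lim_{t→∞} (r − r⋆) e^{r t} ∫_{a + c_t}^{t} e^{−(r−r⋆)x} / W⋆(x) dx = (−r⋆/d⋆) e^{−(r−r⋆)a}. -/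
open MeasureTheory Set Filter

lemma integral_exp_neg_mul_aux (p A B : ℝ) (hp : p ≠ 0) :
    ∫ x in A..B, Real.exp (-(p * x)) =
      (Real.exp (-(p * A)) - Real.exp (-(p * B))) / p := by
  have h : ∀ x : ℝ, HasDerivAt (fun y => -Real.exp (-(p * y)) / p)
      (Real.exp (-(p * x))) x := by
    intro x
    have h1 : HasDerivAt (fun y : ℝ => -(p * y)) (-p) x := by
      simpa [neg_mul] using (hasDerivAt_id x).const_mul (-p)
    have h2 := (h1.exp.neg).div_const p
    exact h2.congr_deriv (by rw [mul_neg, neg_neg, mul_div_assoc, div_self hp, mul_one])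
  have hi : IntervalIntegrable (fun x => Real.exp (-(p * x))) volume A B :=
    ((Real.continuous_exp.comp (continuous_const.mul continuous_id).neg)).intervalIntegrable A B
  rw [intervalIntegral.integral_eq_sub_of_hasDerivAt (fun x _ => h x) hi]
  ring

theorem expected_number_of_old_families_subcritical_clonal
    (bs ds r : ℝ) (hb : 0 < bs) (hd : bs < ds) (hr : 0 < r)
    (rs : ℝ) (hrs : rs = bs - ds)
    (Ws : ℝ → ℝ)
    (hWs : ∀ x : ℝ, Ws x = (bs * Real.exp (rs * x) - ds) / rs)
    (c : ℝ → ℝ) (hc : ∀ t : ℝ, c t = r * t / (r - rs)) :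
    ∀ a : ℝ,
      Tendsto
        (fun t : ℝ => (r - rs) * Real.exp (r * t) *
          ∫ x in (a + c t)..t, Real.exp (-((r - rs) * x)) / Ws x)
        atTop
        (nhds ((-rs / ds) * Real.exp (-((r - rs) * a)))) := by
  intro a
  have hrsneg : rs < 0 := by rw [hrs]; linarith
  have hds : 0 < ds := lt_trans hb hd
  set ρ : ℝ := r - rs with hρ
  have hρpos : 0 < ρ := by simp only [hρ]; linarith
  have hρne : ρ ≠ 0 := ne_of_gt hρpos
  -- the eventually-comparison framework
  -- G t = e^{-ρ a} - e^{rs t}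
  set G : ℝ → ℝ := fun t => Real.exp (-(ρ * a)) - Real.exp (rs * t) with hG
  -- tendsto of exp (rs * t) to 0
  have h0 : Tendsto (fun t : ℝ => Real.exp (rs * t)) atTop (nhds 0) := by
    have : Tendsto (fun t : ℝ => (-rs) * t) atTop atTop :=
      tendsto_id.const_mul_atTop (by linarith)
    have := Real.tendsto_exp_neg_atTop_nhds_zero.comp this
    refine this.congr fun t => ?_
    simp [neg_mul]
  have hGlim : Tendsto G atTop (nhds (Real.exp (-(ρ * a)))) := by
    simpa using (tendsto_const_nhds (α := ℝ) (x := Real.exp (-(ρ * a)))).sub h0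
  -- exp (rs * (a + c t)) → 0
  have h0' : Tendsto (fun t : ℝ => Real.exp (rs * (a + c t))) atTop (nhds 0) := by
    have hlin : Tendsto (fun t : ℝ => (-rs) * (a + c t)) atTop atTop := by
      have : Tendsto (fun t : ℝ => a + c t) atTop atTop := by
        refine tendsto_atTop_add_const_left _ a ?_
        refine Tendsto.congr (fun t => (hc t).symm) ?_
        have h2 : Tendsto (fun t : ℝ => id t * (r / ρ)) atTop atTop :=
          tendsto_id.atTop_mul_const (div_pos hr hρpos)
        refine h2.congr fun t => ?_
        simp only [id_eq]; ring
      exact this.const_mul_atTop (by linarith)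
    have := Real.tendsto_exp_neg_atTop_nhds_zero.comp hlin
    refine this.congr fun t => ?_
    simp [neg_mul]
  -- lower and upper bounding functions
  have hlow : Tendsto (fun t : ℝ => (-rs / ds) * G t) atTop
      (nhds ((-rs / ds) * Real.exp (-((r - rs) * a)))) := by
    exact (hGlim.const_mul _)
  have hupp : Tendsto (fun t : ℝ => (-rs / (ds - bs * Real.exp (rs * (a + c t)))) * G t)
      atTop (nhds ((-rs / ds) * Real.exp (-((r - rs) * a)))) := by
    have hden : Tendsto (fun t : ℝ => ds - bs * Real.exp (rs * (a + c t))) atTop (nhds ds) := by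
      simpa using (tendsto_const_nhds (α := ℝ) (x := ds)).sub (h0'.const_mul bs)
    have := ((tendsto_const_nhds (α := ℝ) (x := -rs)).div hden (ne_of_gt hds)).mul hGlim
    exact this
  -- eventual facts
  have hev1 : ∀ᶠ t : ℝ in atTop, a + c t ≤ t := by
    have h2 : Tendsto (fun t : ℝ => id t * (-rs / ρ)) atTop atTop :=
      tendsto_id.atTop_mul_const (div_pos (by linarith) hρpos)
    filter_upwards [h2.eventually_ge_atTop a] with t ht
    have ht' : a * ρ ≤ t * (-rs) := by
      simp only [id_eq] at ht
      have h3 := mul_le_mul_of_nonneg_right ht hρpos.le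
      calc a * ρ ≤ t * (-rs / ρ) * ρ := h3
        _ = t * (-rs) := by rw [mul_assoc, div_mul_cancel₀ _ hρne]
    have hct : c t * ρ = r * t := by
      rw [hc t, div_mul_cancel₀ _ hρne]
    have hexp : t * ρ = t * r - t * rs := by rw [hρ]; ring
    have hfin : (a + c t) * ρ ≤ t * ρ := by rw [add_mul]; linarith
    exact le_of_mul_le_mul_right hfin hρpos
  have hev2 : ∀ᶠ t : ℝ in atTop, bs * Real.exp (rs * (a + c t)) < ds := by
    have h := (h0'.const_mul bs)
    rw [mul_zero] at h
    exact h.eventually_lt_const hds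
  have hrsne : rs ≠ 0 := ne_of_lt hrsneg
  have hWcont : Continuous Ws := by
    have hfe : Ws = fun x => (bs * Real.exp (rs * x) - ds) / rs := funext hWs
    rw [hfe]; fun_prop
  have hecont : Continuous fun x : ℝ => Real.exp (-(ρ * x)) := by fun_prop
  have hct : ∀ t : ℝ, c t * ρ = r * t := fun t => by
    rw [hc t, div_mul_cancel₀ _ hρne]
  have hboth : ∀ᶠ t : ℝ in atTop,
      (-rs / ds) * G t ≤ ρ * Real.exp (r * t) *
          (∫ x in (a + c t)..t, Real.exp (-(ρ * x)) / Ws x) ∧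
        ρ * Real.exp (r * t) *
          (∫ x in (a + c t)..t, Real.exp (-(ρ * x)) / Ws x) ≤
        (-rs / (ds - bs * Real.exp (rs * (a + c t)))) * G t := by
    filter_upwards [hev1, hev2] with t hAt hlt
    have hDA : 0 < ds - bs * Real.exp (rs * (a + c t)) := by linarith
    have hD : ∀ x ∈ Set.Icc (a + c t) t,
        ds - bs * Real.exp (rs * (a + c t)) ≤ ds - bs * Real.exp (rs * x) := by
      intro x hx
      have h1 : rs * x ≤ rs * (a + c t) := by nlinarith [hx.1]
      have := Real.exp_le_exp.2 h1
      nlinarith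
    have hWeq : ∀ x ∈ Set.Icc (a + c t) t,
        Ws x = (ds - bs * Real.exp (rs * x)) / (-rs) := by
      intro x hx
      rw [hWs x, div_eq_div_iff hrsne (by linarith : (-rs : ℝ) ≠ 0)]
      ring
    have hWpos : ∀ x ∈ Set.Icc (a + c t) t, 0 < Ws x := by
      intro x hx
      rw [hWeq x hx]
      have := hD x hx
      exact div_pos (by linarith) (by linarith)
    have hgint : IntervalIntegrable (fun x => Real.exp (-(ρ * x)) / Ws x)
        volume (a + c t) t := by
      apply ContinuousOn.intervalIntegrable
      rw [Set.uIcc_of_le hAt]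
      exact hecont.continuousOn.div hWcont.continuousOn fun x hx => (hWpos x hx).ne'
    -- key identity
    have e1 : Real.exp (r * t) * Real.exp (-(ρ * (a + c t))) = Real.exp (-(ρ * a)) := by
      rw [← Real.exp_add]; congr 1; linear_combination -hct t
    have e2 : Real.exp (r * t) * Real.exp (-(ρ * t)) = Real.exp (rs * t) := by
      rw [← Real.exp_add]; congr 1; linear_combination (-t) * hρ
    have key : ρ * Real.exp (r * t) *
        ((Real.exp (-(ρ * (a + c t))) - Real.exp (-(ρ * t))) / ρ) = G t := by
      have h1 : ρ * Real.exp (r * t) *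
          ((Real.exp (-(ρ * (a + c t))) - Real.exp (-(ρ * t))) / ρ)
          = Real.exp (r * t) * Real.exp (-(ρ * (a + c t)))
            - Real.exp (r * t) * Real.exp (-(ρ * t)) := by
        field_simp
      rw [h1, e1, e2]
    have hρexp : (0 : ℝ) ≤ ρ * Real.exp (r * t) := by positivity
    constructor
    · -- lower bound
      have hmono : ∀ x ∈ Set.Icc (a + c t) t,
          (-rs / ds) * Real.exp (-(ρ * x)) ≤ Real.exp (-(ρ * x)) / Ws x := by
        intro x hx
        rw [hWeq x hx, div_div_eq_mul_div]
        have hrw : (-rs / ds) * Real.exp (-(ρ * x))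
            = Real.exp (-(ρ * x)) * -rs / ds := by ring
        rw [hrw]
        have hDx : 0 < ds - bs * Real.exp (rs * x) := lt_of_lt_of_le hDA (hD x hx)
        have hDxds : ds - bs * Real.exp (rs * x) ≤ ds := by
          nlinarith [Real.exp_pos (rs * x)]
        gcongr
        nlinarith [Real.exp_pos (-(ρ * x)), hrsneg]
      have hcint : IntervalIntegrable (fun x => (-rs / ds) * Real.exp (-(ρ * x)))
          volume (a + c t) t := (continuous_const.mul hecont).intervalIntegrable _ _
      have hIle := intervalIntegral.integral_mono_on hAt hcint hgint hmono
      rw [intervalIntegral.integral_const_mul, integral_exp_neg_mul_aux ρ _ _ hρne] at hIle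
      have hmul := mul_le_mul_of_nonneg_left hIle hρexp
      have hfinal : (-rs / ds) * G t = ρ * Real.exp (r * t) *
          ((-rs / ds) * ((Real.exp (-(ρ * (a + c t))) - Real.exp (-(ρ * t))) / ρ)) := by
        rw [← key]; ring
      rw [hfinal]
      exact hmul
    · -- upper bound
      have hmono : ∀ x ∈ Set.Icc (a + c t) t,
          Real.exp (-(ρ * x)) / Ws x ≤
            (-rs / (ds - bs * Real.exp (rs * (a + c t)))) * Real.exp (-(ρ * x)) := by
        intro x hx
        rw [hWeq x hx, div_div_eq_mul_div]
        have hrw : (-rs / (ds - bs * Real.exp (rs * (a + c t)))) * Real.exp (-(ρ * x))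
            = Real.exp (-(ρ * x)) * -rs / (ds - bs * Real.exp (rs * (a + c t))) := by ring
        rw [hrw]
        have hDx := hD x hx
        gcongr
        nlinarith [Real.exp_pos (-(ρ * x)), hrsneg]
      have hcint : IntervalIntegrable
          (fun x => (-rs / (ds - bs * Real.exp (rs * (a + c t)))) * Real.exp (-(ρ * x)))
          volume (a + c t) t := (continuous_const.mul hecont).intervalIntegrable _ _
      have hIle := intervalIntegral.integral_mono_on hAt hgint hcint hmono
      rw [intervalIntegral.integral_const_mul, integral_exp_neg_mul_aux ρ _ _ hρne] at hIle
      have hmul := mul_le_mul_of_nonneg_left hIle hρexp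
      have hfinal : (-rs / (ds - bs * Real.exp (rs * (a + c t)))) * G t
          = ρ * Real.exp (r * t) * ((-rs / (ds - bs * Real.exp (rs * (a + c t)))) *
            ((Real.exp (-(ρ * (a + c t))) - Real.exp (-(ρ * t))) / ρ)) := by
        rw [← key]; ring
      rw [hfinal]
      exact hmul
  exact tendsto_of_tendsto_of_tendsto_of_le_of_le' hlow hupp
    (hboth.mono fun t h => h.1) (hboth.mono fun t h => h.2)
end

section
/- Let b > d ≥ 0, set r = b − d > 0, let p ∈ (0,1) with b(1−p) ≠ d, set b_p = b(1−p), r_p = b(1−p) − d and W_p(u) = (b_p e^{r_p u} − d)/r_p. Then (r p/(1−p)) ∫_0^∞ e^{−r u} ln(W_p(u)) du = (r − r_p) ∫_0^∞ e^{−(r − r_p) u} / W_p(u) du, where r − r_p = b p. -/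
open MeasureTheory Set

theorem two_expressions_for_J_model_I_exponential_case
    (b d p : ℝ) (hd : 0 ≤ d) (hbd : d < b) (hp : p ∈ Set.Ioo (0:ℝ) 1)
    (hne : b * (1 - p) ≠ d)
    (r bp rp : ℝ) (hr : r = b - d) (hbp : bp = b * (1 - p))
    (hrp : rp = b * (1 - p) - d)
    (Wp : ℝ → ℝ)
    (hWp : ∀ u : ℝ, Wp u = (bp * Real.exp (rp * u) - d) / rp) :
    (r * p / (1 - p)) *
        (∫ u in Ioi (0:ℝ), Real.exp (-(r * u)) * Real.log (Wp u))
      = (r - rp) * (∫ u in Ioi (0:ℝ), Real.exp (-((r - rp) * u)) / Wp u) ∧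
    r - rp = b * p := by
  obtain ⟨hp0, hp1⟩ := hp
  have h1p : (0:ℝ) < 1 - p := by linarith
  have hb : 0 < b := lt_of_le_of_lt hd hbd
  have hr0 : 0 < r := by rw [hr]; linarith
  have hbp0 : 0 < bp := by rw [hbp]; positivity
  have hrp0 : rp ≠ 0 := by
    rw [hrp]; intro h; exact hne (by linarith)
  have hrrp : r - rp = b * p := by rw [hr, hrp]; ring
  have hbrp : bp - d = rp := by rw [hbp, hrp]
  have hbpr : 0 < r - rp := by rw [hrrp]; positivity
  refine ⟨?_, hrrp⟩
  -- Wp ≥ 1 on [0, ∞)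
  have hW1 : ∀ u : ℝ, 0 ≤ u → 1 ≤ Wp u := by
    intro u hu
    have key : 0 ≤ bp * (Real.exp (rp * u) - 1) / rp := by
      rcases lt_or_gt_of_ne hrp0 with hneg | hpos
      · have h1 : rp * u ≤ 0 := mul_nonpos_of_nonpos_of_nonneg hneg.le hu
        have h2 : Real.exp (rp * u) ≤ 1 := Real.exp_le_one_iff.mpr h1
        rw [div_nonneg_iff]
        exact Or.inr ⟨mul_nonpos_of_nonneg_of_nonpos hbp0.le (by linarith), hneg.le⟩
      · have h1 : 0 ≤ rp * u := mul_nonneg hpos.le hu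
        have h2 : 1 ≤ Real.exp (rp * u) := Real.one_le_exp h1
        exact div_nonneg (mul_nonneg hbp0.le (by linarith)) hpos.le
    have heq : Wp u - 1 = bp * (Real.exp (rp * u) - 1) / rp := by
      rw [hWp]
      field_simp
      ring_nf
      nlinarith [Real.exp_pos (rp * u)]
    linarith
  have hWpos : ∀ u : ℝ, 0 ≤ u → 0 < Wp u := fun u hu => lt_of_lt_of_le one_pos (hW1 u hu)
  -- upper bound for Wp
  have hWub : ∀ u : ℝ, Wp u ≤ |bp / rp| * Real.exp (rp * u) + |d / rp| := by
    intro u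
    rw [hWp]
    have e1 : bp * Real.exp (rp * u) / rp ≤ |bp / rp| * Real.exp (rp * u) := by
      rw [mul_div_right_comm]
      exact mul_le_mul_of_nonneg_right (le_abs_self _) (Real.exp_pos _).le
    have e2 : -(d / rp) ≤ |d / rp| := neg_le_abs _
    calc (bp * Real.exp (rp * u) - d) / rp
        = bp * Real.exp (rp * u) / rp + -(d / rp) := by ring
      _ ≤ |bp / rp| * Real.exp (rp * u) + |d / rp| := add_le_add e1 e2
  -- continuity of Wp
  have hWcontF : Wp = fun u => (bp * Real.exp (rp * u) - d) / rp := funext hWp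
  have hWcont : Continuous Wp := by rw [hWcontF]; fun_prop
  -- derivative of Wp
  have hWderiv : ∀ u : ℝ, HasDerivAt Wp (bp * Real.exp (rp * u)) u := by
    intro u
    rw [hWcontF]
    have h1 : HasDerivAt (fun u : ℝ => rp * u) rp u := by
      simpa using (hasDerivAt_id u).const_mul rp
    have h2 := (h1.exp.const_mul bp).sub_const d
    have h3 := h2.div_const rp
    refine h3.congr_deriv ?_
    field_simp
  -- the two integrands
  set g1 : ℝ → ℝ := fun u => Real.exp (-(r * u)) * Real.log (Wp u) with hg1
  set g2 : ℝ → ℝ := fun u => Real.exp (-((r - rp) * u)) / Wp u with hg2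
  -- integrability of g2
  have hint2 : IntegrableOn g2 (Ioi (0:ℝ)) := by
    apply Integrable.mono' ((exp_neg_integrableOn_Ioi 0 hbpr).congr_fun
      (fun x _ => by beta_reduce; rw [neg_mul]) measurableSet_Ioi)
    · exact ((Real.continuous_exp.comp (by fun_prop)).continuousOn.div
        hWcont.continuousOn
        (fun x hx => (hWpos x (le_of_lt hx)).ne')).aestronglyMeasurable measurableSet_Ioi
    · filter_upwards [ae_restrict_mem measurableSet_Ioi] with x hx
      have hx0 : (0:ℝ) ≤ x := (le_of_lt hx)
      rw [Real.norm_of_nonneg (div_nonneg (Real.exp_pos _).le (hWpos x hx0).le)]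
      exact div_le_self (Real.exp_pos _).le (hW1 x hx0)
  -- integrability of g1
  have hbound : Integrable (fun u => |bp / rp| * Real.exp (-((r - rp) * u))
      + |d / rp| * Real.exp (-(r * u))) (volume.restrict (Ioi (0:ℝ))) := by
    apply Integrable.add
    · exact (((exp_neg_integrableOn_Ioi 0 hbpr).congr_fun
        (fun x _ => by rw [neg_mul]) measurableSet_Ioi).const_mul _)
    · exact (((exp_neg_integrableOn_Ioi 0 hr0).congr_fun
        (fun x _ => by rw [neg_mul]) measurableSet_Ioi).const_mul _)
  have hg1bd : ∀ x : ℝ, 0 ≤ x → g1 x ≤ |bp / rp| * Real.exp (-((r - rp) * x))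
      + |d / rp| * Real.exp (-(r * x)) := by
    intro x hx0
    have hlog : Real.log (Wp x) ≤ Wp x := by
      have := Real.log_le_sub_one_of_pos (hWpos x hx0)
      linarith
    have h1 : g1 x ≤ Real.exp (-(r * x)) * Wp x :=
      mul_le_mul_of_nonneg_left hlog (Real.exp_pos _).le
    have h2 : Real.exp (-(r * x)) * Wp x ≤
        Real.exp (-(r * x)) * (|bp / rp| * Real.exp (rp * x) + |d / rp|) :=
      mul_le_mul_of_nonneg_left (hWub x) (Real.exp_pos _).le
    have h3 : Real.exp (-(r * x)) * Real.exp (rp * x) = Real.exp (-((r - rp) * x)) := by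
      rw [← Real.exp_add]; ring_nf
    calc g1 x ≤ Real.exp (-(r * x)) * (|bp / rp| * Real.exp (rp * x) + |d / rp|) :=
          le_trans h1 h2
      _ = |bp / rp| * (Real.exp (-(r * x)) * Real.exp (rp * x))
          + |d / rp| * Real.exp (-(r * x)) := by ring
      _ = _ := by rw [h3]
  have hg1nn : ∀ x : ℝ, 0 ≤ x → 0 ≤ g1 x := by
    intro x hx0
    exact mul_nonneg (Real.exp_pos _).le (Real.log_nonneg (hW1 x hx0))
  have hint1 : IntegrableOn g1 (Ioi (0:ℝ)) := by
    apply Integrable.mono' hbound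
    · exact (Real.continuous_exp.comp (by fun_prop)).continuousOn.mul
        (hWcont.continuousOn.log (fun x hx => (hWpos x (le_of_lt hx)).ne'))
        |>.aestronglyMeasurable measurableSet_Ioi
    · filter_upwards [ae_restrict_mem measurableSet_Ioi] with x hx
      rw [Real.norm_of_nonneg (hg1nn x (le_of_lt hx))]
      exact hg1bd x (le_of_lt hx)
  -- the antiderivative
  set F : ℝ → ℝ := fun u => -(1 / r) * (Real.exp (-(r * u)) * Real.log (Wp u)) with hF
  have hFderiv : ∀ u ∈ Ici (0:ℝ), HasDerivAt F (g1 u - (bp / r) * g2 u) u := by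
    intro u hu
    have hWne : Wp u ≠ 0 := (hWpos u hu).ne'
    have h1 : HasDerivAt (fun u : ℝ => Real.exp (-(r * u))) (Real.exp (-(r * u)) * (-r)) u := by
      have := ((hasDerivAt_id u).const_mul (-r)).exp
      simpa [neg_mul, mul_comm] using this
    have h2 : HasDerivAt (fun u => Real.log (Wp u)) (bp * Real.exp (rp * u) / Wp u) u :=
      (hWderiv u).log hWne
    have h3 := (h1.mul h2).const_mul (-(1 / r))
    refine h3.congr_deriv ?_
    have h4 : Real.exp (-((r - rp) * u)) = Real.exp (-(r * u)) * Real.exp (rp * u) := by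
      rw [← Real.exp_add]; ring_nf
    simp only [hg1, hg2, h4]
    field_simp
    ring
  -- F tends to 0 at top
  have hFtend : Filter.Tendsto F Filter.atTop (nhds 0) := by
    have hH : Filter.Tendsto g1 Filter.atTop (nhds 0) := by
      apply squeeze_zero' (Filter.eventually_atTop.mpr ⟨0, fun x hx => hg1nn x hx⟩)
        (Filter.eventually_atTop.mpr ⟨0, fun x hx => hg1bd x hx⟩)
      have t1 : ∀ c : ℝ, 0 < c → Filter.Tendsto (fun x : ℝ => Real.exp (-(c * x)))
          Filter.atTop (nhds 0) := by
        intro c hc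
        apply Real.tendsto_exp_atBot.comp
        exact Filter.tendsto_neg_atBot_iff.mpr
          (Filter.tendsto_id.const_mul_atTop hc)
      have := ((t1 (r - rp) hbpr).const_mul (|bp / rp|)).add
        ((t1 r hr0).const_mul (|d / rp|))
      simpa using this
    have : F = fun u => -(1 / r) * g1 u := rfl
    rw [this]
    have := hH.const_mul (-(1 / r))
    simpa using this
  -- FTC
  have hFTC := integral_Ioi_of_hasDerivAt_of_tendsto' hFderiv
    (hint1.sub (hint2.const_mul (bp / r))) hFtend
  have hW0 : Wp 0 = 1 := by
    rw [hWp]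
    norm_num
    rw [hbrp]
    exact div_self hrp0
  have hF0 : F 0 = 0 := by simp [hF, hW0]
  rw [hF0, sub_zero] at hFTC
  rw [integral_sub hint1 (hint2.const_mul (bp / r)), integral_const_mul] at hFTC
  have hkey : ∫ u in Ioi (0:ℝ), g1 u = (bp / r) * ∫ u in Ioi (0:ℝ), g2 u := by linarith
  show (r * p / (1 - p)) * ∫ u in Ioi (0:ℝ), g1 u = (r - rp) * ∫ u in Ioi (0:ℝ), g2 u
  rw [hkey, hrrp, hbp]
  field_simp
end
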